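/- arXiv:1609.04176 — 4 statements merged into one kernel-verified Lean document; each statement's English description precedes it below -/
import Mathlib

section
/- (Loading) Let P be an RB-template (each letter of Σ_rdz labeling at most one edge) with reachability-unwinding P^⊸. For all b, n ∈ ℕ there exist N ∈ ℕ and a finite run π of the system (P^⊸)^N containing exactly b broadcast transitions, such that the final configuration f of π satisfies |f^{−1}((s, comp(b)))| ≥ n for every state s of the component P_{comp(b)}. -/
/-! ### Core definitions: RB-templates and RB-systems -/

/-- Edge labels: a rendezvous letter `a_j` (an action together with an index in `[k]`),
or the broadcast letter `𝔟` (represented by `Sum.inr ()`). -/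
abbrev Lab (k : ℕ) (A : Type) := (A × Fin k) ⊕ Unit

/-- Edges of a labeled transition system over states `S`. -/
abbrev EdgeT (k : ℕ) (A S : Type) := S × Lab k A × S

/-- An RB-template: a set of initial states and a set of labeled edges. -/
structure RBTemplate (k : ℕ) (A : Type) (S : Type) where
  I : Set S
  R : Set (EdgeT k A S)

/-- Broadcast totality: every state has an outgoing broadcast edge. -/
def RBTemplate.BTotal {k : ℕ} {A S : Type} (P : RBTemplate k A S) : Prop :=
  ∀ s : S, ∃ t : S, (s, Sum.inr (), t) ∈ P.R

/-- Each rendezvous letter labels at most one edge. -/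
def RBTemplate.UniqLab {k : ℕ} {A S : Type} (P : RBTemplate k A S) : Prop :=
  ∀ (ς : A × Fin k) (s t s' t' : S),
    (s, Sum.inl ς, t) ∈ P.R → (s', Sum.inl ς, t') ∈ P.R → s = s' ∧ t = t'

/-- Synchronization label of a global transition of a system whose processes are
indexed by `ι`: either a broadcast, or a `k`-wise rendezvous on action `a` by the
processes `procs 0, …, procs (k-1)`. -/
inductive Sync (k : ℕ) (A : Type) (ι : Type) where
  | bcast : Sync k A ι
  | rdz (a : A) (procs : Fin k → ι) : Sync k A ι

/-- `(f, σ, g)` is a global transition of the system with processes indexed by `ι`. -/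
def RBTrans {k : ℕ} {A S : Type} (P : RBTemplate k A S) {ι : Type}
    (f : ι → S) (σ : Sync k A ι) (g : ι → S) : Prop :=
  match σ with
  | .bcast => ∀ i, (f i, Sum.inr (), g i) ∈ P.R
  | .rdz a procs =>
      Function.Injective procs ∧
      (∀ j : Fin k, (f (procs j), Sum.inl (a, j), g (procs j)) ∈ P.R) ∧
      (∀ i, (∀ j, procs j ≠ i) → g i = f i)

/-- Process `i` moves in a transition with synchronization label `σ`. -/
def Sync.Moved {k : ℕ} {A ι : Type} (σ : Sync k A ι) (i : ι) : Prop :=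
  match σ with
  | .bcast => True
  | .rdz _ procs => ∃ j, procs j = i

/-- The edge of the template taken by process `i` in the global transition `(f, σ, g)`
(`none` if `i` does not move). -/
noncomputable def edgeAt {k : ℕ} {A S ι : Type} (f g : ι → S) (σ : Sync k A ι) (i : ι) :
    Option (EdgeT k A S) :=
  match σ with
  | .bcast => some (f i, Sum.inr (), g i)
  | .rdz a procs =>
      letI := Classical.propDecidable (∃ j, procs j = i)
      if h : ∃ j, procs j = i then some (f i, Sum.inl (a, Classical.choose h), g i)
      else none

/-- A finite path of the RB-system with processes indexed by `ι`:
a length, configurations `conf 0, …, conf len`, and transitions between them. -/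
structure FinPath {k : ℕ} {A S : Type} (P : RBTemplate k A S) (ι : Type) where
  len : ℕ
  conf : ℕ → ι → S
  sync : ℕ → Sync k A ι
  valid : ∀ t, t < len → RBTrans P (conf t) (sync t) (conf (t + 1))

/-- An infinite path of the RB-system with processes indexed by `ι`. -/
structure InfPath {k : ℕ} {A S : Type} (P : RBTemplate k A S) (ι : Type) where
  conf : ℕ → ι → S
  sync : ℕ → Sync k A ι
  valid : ∀ t, RBTrans P (conf t) (sync t) (conf (t + 1))

/-- A finite run: a finite path starting at an initial configuration. -/
def FinPath.IsRun {k : ℕ} {A S : Type} {P : RBTemplate k A S} {ι : Type}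
    (p : FinPath P ι) : Prop :=
  ∀ i, p.conf 0 i ∈ P.I

/-- An infinite run: an infinite path starting at an initial configuration. -/
def InfPath.IsRun {k : ℕ} {A S : Type} {P : RBTemplate k A S} {ι : Type}
    (p : InfPath P ι) : Prop :=
  ∀ i, p.conf 0 i ∈ P.I

/-- The projection of a finite path onto process `i`: the sequence of edges taken by `i`. -/
noncomputable def FinPath.proj {k : ℕ} {A S : Type} {P : RBTemplate k A S} {ι : Type}
    (p : FinPath P ι) (i : ι) : List (EdgeT k A S) :=
  (List.range p.len).filterMap (fun t => edgeAt (p.conf t) (p.conf (t + 1)) (p.sync t) i)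

/-- The number of broadcast transitions on a finite path. -/
noncomputable def FinPath.bcasts {k : ℕ} {A S : Type} {P : RBTemplate k A S} {ι : Type}
    (p : FinPath P ι) : ℕ :=
  Nat.card {t : ℕ // t < p.len ∧ p.sync t = Sync.bcast}

/-- The set of finite executions of the RB-system induced by `P`: projections onto
process `0` of the finite runs of the systems `P^n`, `n ∈ ℕ`. -/
def execFin {k : ℕ} {A S : Type} (P : RBTemplate k A S) : Set (List (EdgeT k A S)) :=
  {w | ∃ n : ℕ, ∃ p : FinPath P (Fin (n + 1)), p.IsRun ∧ p.proj 0 = w}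

/-- The set of infinite executions of the RB-system induced by `P`: infinite projections
onto process `0` of the runs of the systems `P^n`, `n ∈ ℕ`.  Here `ι` enumerates, in
increasing order, exactly the transitions in which process `0` moves. -/
def execInf {k : ℕ} {A S : Type} (P : RBTemplate k A S) : Set (ℕ → EdgeT k A S) :=
  {w | ∃ n : ℕ, ∃ p : InfPath P (Fin (n + 1)), p.IsRun ∧
    ∃ ι : ℕ → ℕ, StrictMono ι ∧
      (∀ t, (p.sync t).Moved 0 ↔ ∃ m, ι m = t) ∧
      (∀ m, edgeAt (p.conf (ι m)) (p.conf (ι m + 1)) (p.sync (ι m)) 0 = some (w m))}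

/-! ### The reachability-unwinding -/

/-- `X` is closed under the saturation rule for the set `J` of initial states. -/
def SatClosed {k : ℕ} {A S : Type} (P : RBTemplate k A S) (J : Set S) (X : Set S) : Prop :=
  J ⊆ X ∧ ∀ (s : S) (a : A) (_h : Fin k) (t : S), s ∈ X → (s, Sum.inl (a, _h), t) ∈ P.R →
    (∀ l : Fin k, ∃ s' t' : S, s' ∈ X ∧ (s', Sum.inl (a, l), t') ∈ P.R) → t ∈ X

/-- The saturated state set `S_i` generated from the set `J` of initial states:
the least set containing `J` and closed under the saturation rule. -/
def SatS {k : ℕ} {A S : Type} (P : RBTemplate k A S) (J : Set S) : Set S :=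
  ⋂₀ {X | SatClosed P J X}

/-- The saturated edge set `R_i` generated from the set `J` of initial states. -/
def SatR {k : ℕ} {A S : Type} (P : RBTemplate k A S) (J : Set S) : Set (EdgeT k A S) :=
  {e | ∃ (s : S) (a : A) (h : Fin k) (t : S), e = (s, Sum.inl (a, h), t) ∧
    s ∈ SatS P J ∧ e ∈ P.R ∧
    ∀ l : Fin k, ∃ s' t' : S, s' ∈ SatS P J ∧ (s', Sum.inl (a, l), t') ∈ P.R}

/-- The initial-state sets `I_i` of the components `P_i` of the reachability-unwinding
(each component `P_i = (S_i, I_i, R_i)` is completely determined by `I_i`, via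
`S_i = SatS P (compI P i)` and `R_i = SatR P (compI P i)`). -/
def compI {k : ℕ} {A S : Type} (P : RBTemplate k A S) : ℕ → Set S
  | 0 => P.I
  | i + 1 => {s | ∃ h : S, h ∈ SatS P (compI P i) ∧ (h, Sum.inr (), s) ∈ P.R}

/-- `(n, m)` is the (least) lasso pair of the unwinding construction: the components
`P_0, …, P_m` are pairwise distinct and `P_n = P_{m+1}`.  The prefix length is `n` and
the period is `r = m + 1 - n`. -/
def IsLasso {k : ℕ} {A S : Type} (P : RBTemplate k A S) (n m : ℕ) : Prop :=
  n ≤ m ∧ compI P n = compI P (m + 1) ∧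
    ∀ i j : ℕ, i < j → j ≤ m → compI P i ≠ compI P j

/-- The component number associated with `i`, for the lasso pair `(n, m)`. -/
def compAt (n m i : ℕ) : ℕ := if i ≤ m then i else n + (i - n) % (m + 1 - n)

/-- The reachability-unwinding `P^⊸` of `P`, for the lasso pair `(n, m)`: states are
pairs (state of `P`, component number). -/
def unwind {k : ℕ} {A S : Type} (P : RBTemplate k A S) (n m : ℕ) :
    RBTemplate k A (S × ℕ) where
  I := {x | x.1 ∈ P.I ∧ x.2 = 0}
  R := {e | (∃ (s t : S) (ς : A × Fin k) (i : ℕ), i ≤ m ∧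
              e = ((s, i), Sum.inl ς, (t, i)) ∧ (s, Sum.inl ς, t) ∈ SatR P (compI P i)) ∨
            (∃ (s t : S) (i : ℕ), i ≤ m ∧
              e = ((s, i), Sum.inr (), (t, compAt n m (i + 1))) ∧
              s ∈ SatS P (compI P i) ∧ (s, Sum.inr (), t) ∈ P.R)}

/-- Erasing the component numbers from an edge of the unwinding. -/
def erE {k : ℕ} {A S : Type} (e : EdgeT k A (S × ℕ)) : EdgeT k A S :=
  (e.1.1, e.2.1, e.2.2.1)

/-! ### Auxiliary machinery -/

section Aux

variable {k : ℕ} {A S : Type}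

/-- `SatS` is itself saturation-closed. -/
lemma satS_closed (P : RBTemplate k A S) (J : Set S) : SatClosed P J (SatS P J) := by
  constructor
  · intro s hs X hX
    exact hX.1 hs
  · intro s a h t hs he hside X hX
    refine hX.2 s a h t (hs X hX) he (fun l => ?_)
    obtain ⟨s', t', hs', he'⟩ := hside l
    exact ⟨s', t', hs' X hX, he'⟩

/-- `SatS` is the least saturation-closed set. -/
lemma satS_min {P : RBTemplate k A S} {J Q : Set S} (h : SatClosed P J Q) :
    SatS P J ⊆ Q := fun _s hs => hs Q h

lemma mem_satR {P : RBTemplate k A S} {J : Set S} {s : S} {a : A} {l : Fin k} {t : S}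
    (hs : s ∈ SatS P J) (he : (s, Sum.inl (a, l), t) ∈ P.R)
    (hside : ∀ l' : Fin k, ∃ s' t' : S, s' ∈ SatS P J ∧ (s', Sum.inl (a, l'), t') ∈ P.R) :
    (s, Sum.inl (a, l), t) ∈ SatR P J :=
  ⟨s, a, l, t, rfl, hs, he, hside⟩

/-! #### compI / compAt arithmetic -/

lemma mod_succ_eq (x r : ℕ) (hr : 0 < r) :
    (x + 1) % r = if x % r + 1 = r then 0 else x % r + 1 := by
  have h := Nat.div_add_mod x r
  have hlt := Nat.mod_lt x hr
  have hx : x + 1 = r * (x / r) + (x % r + 1) := by omega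
  rw [hx, Nat.mul_add_mod]
  split
  · next h' => rw [h']; exact Nat.mod_self r
  · next h' => exact Nat.mod_eq_of_lt (by omega)

lemma compI_add_period (P : RBTemplate k A S) {n m : ℕ} (hnm : n ≤ m)
    (hp : compI P n = compI P (m + 1)) :
    ∀ j, n ≤ j → compI P (j + (m + 1 - n)) = compI P j := by
  intro j hj
  induction j, hj using Nat.le_induction with
  | base =>
    have : n + (m + 1 - n) = m + 1 := by omega
    rw [this, ← hp]
  | succ j hj ih =>
    have h1 : j + 1 + (m + 1 - n) = (j + (m + 1 - n)) + 1 := by omega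
    rw [h1]
    show compI P ((j + (m + 1 - n)) + 1) = compI P (j + 1)
    simp only [compI, ih]

lemma compI_compAt (P : RBTemplate k A S) {n m : ℕ} (hnm : n ≤ m)
    (hp : compI P n = compI P (m + 1)) (i : ℕ) :
    compI P (compAt n m i) = compI P i := by
  unfold compAt
  split
  · rfl
  · next h =>
    have hmi : m < i := by omega
    have key : ∀ x, compI P (n + x % (m + 1 - n)) = compI P (n + x) := by
      intro x
      induction x using Nat.strong_induction_on with
      | _ x ih =>
        by_cases hx : x < m + 1 - n
        · rw [Nat.mod_eq_of_lt hx]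
        · have hr : 0 < m + 1 - n := by omega
          have hxx : x % (m + 1 - n) = (x - (m + 1 - n)) % (m + 1 - n) := by
            conv_lhs => rw [show x = (x - (m + 1 - n)) + (m + 1 - n) by omega]
            rw [Nat.add_mod_right]
          rw [hxx, ih _ (by omega)]
          have : n + x = (n + (x - (m + 1 - n))) + (m + 1 - n) := by omega
          rw [this, compI_add_period P hnm hp _ (by omega)]
    have := key (i - n)
    rwa [show n + (i - n) = i by omega] at this

lemma compAt_le {n m : ℕ} (hnm : n ≤ m) (i : ℕ) : compAt n m i ≤ m := by
  unfold compAt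
  split
  · omega
  · have := Nat.mod_lt (i - n) (show 0 < m + 1 - n by omega)
    omega

lemma compAt_succ_eq {n m : ℕ} (hnm : n ≤ m) (b : ℕ) :
    compAt n m (compAt n m b + 1) = compAt n m (b + 1) := by
  have hA : ∀ i, i ≤ m → compAt n m i = i := by
    intro i hi; unfold compAt; rw [if_pos hi]
  have hB : ∀ i, ¬ i ≤ m → compAt n m i = n + (i - n) % (m + 1 - n) := by
    intro i hi; unfold compAt; rw [if_neg hi]
  by_cases hb : b ≤ m
  · rw [hA b hb]
  · have hr : 0 < m + 1 - n := by omega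
    set y := (b - n) % (m + 1 - n) with hy'
    have hy : y < m + 1 - n := Nat.mod_lt _ hr
    have hcb : compAt n m b = n + y := hB b hb
    have hb1 : ¬ (b + 1 ≤ m) := by omega
    have hsub : b + 1 - n = (b - n) + 1 := by omega
    have hrhs : compAt n m (b + 1) = n + (if y + 1 = m + 1 - n then 0 else y + 1) := by
      rw [hB _ hb1, hsub, mod_succ_eq _ _ hr, ← hy']
    rw [hcb]
    by_cases hc1 : n + y + 1 ≤ m
    · rw [hA _ hc1, hrhs, if_neg (by omega)]; omega
    · rw [hB _ hc1, hrhs, if_pos (by omega),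
        show n + y + 1 - n = m + 1 - n by omega, Nat.mod_self]

lemma compAt_zero {n m : ℕ} : compAt n m 0 = 0 := by
  rw [compAt, if_pos (Nat.zero_le m)]

end Aux

/-! #### Step sequences -/

section Steps

variable {k : ℕ} {A : Type}

/-- A path from `f` to `g` with exactly `b` broadcasts, snoc-shaped. -/
inductive Steps {St : Type} (U : RBTemplate k A St) {ι : Type} (f : ι → St) :
    ℕ → (ι → St) → Prop
  | nil : Steps U f 0 f
  | rdz {g g' : ι → St} {b : ℕ} (a : A) (procs : Fin k → ι) :
      Steps U f b g → RBTrans U g (.rdz a procs) g' → Steps U f b g'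
  | bcast {g g' : ι → St} {b : ℕ} :
      Steps U f b g → RBTrans U g .bcast g' → Steps U f (b + 1) g'

variable {St ι ι₁ ι₂ : Type} {U : RBTemplate k A St}

lemma Steps.empty [IsEmpty ι] (f : ι → St) (b : ℕ) : Steps U f b f := by
  induction b with
  | zero => exact .nil
  | succ b ih => exact ih.bcast (fun i => isEmptyElim i)

lemma Steps.append0 {g : ι → St} {b2 : ℕ} {h : ι → St} (d2 : Steps U g b2 h) :
    ∀ {f : ι → St} {b : ℕ}, Steps U f b g → b2 = 0 → Steps U f b h := by
  induction d2 with
  | nil => intro f b d1 _; exact d1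
  | rdz a procs d tr ih => intro f b d1 hb; exact (ih d1 hb).rdz a procs tr
  | bcast d tr ih => intro f b d1 hb; omega

lemma Steps.split {f : ι → St} {b : ℕ} {g : ι → St} (d : Steps U f b g) :
    ∀ b', b = b' + 1 →
      ∃ p q, Steps U f b' p ∧ RBTrans U p .bcast q ∧ Steps U q 0 g := by
  induction d with
  | nil => intro b' hb; omega
  | rdz a procs d tr ih =>
    intro b' hb
    obtain ⟨p, q, d1, tb, d2⟩ := ih b' hb
    exact ⟨p, q, d1, tb, d2.rdz a procs tr⟩
  | @bcast g q b d tr _ih =>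
    intro b' hb
    obtain rfl : b' = b := by omega
    exact ⟨_, _, d, tr, .nil⟩

lemma rdz_liftL {f g : ι₁ → St} {a : A} {procs : Fin k → ι₁}
    (tr : RBTrans U f (.rdz a procs) g) (h : ι₂ → St) :
    RBTrans U (Sum.elim f h) (.rdz a (Sum.inl ∘ procs)) (Sum.elim g h) := by
  obtain ⟨hinj, hedge, hfix⟩ := tr
  refine ⟨Sum.inl_injective.comp hinj, fun j => hedge j, ?_⟩
  rintro (x | y) hx
  · exact hfix x (fun j hj => hx j (congrArg Sum.inl hj))
  · rfl

lemma rdz_liftR {f g : ι₂ → St} {a : A} {procs : Fin k → ι₂}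
    (tr : RBTrans U f (.rdz a procs) g) (h : ι₁ → St) :
    RBTrans U (Sum.elim h f) (.rdz a (Sum.inr ∘ procs)) (Sum.elim h g) := by
  obtain ⟨hinj, hedge, hfix⟩ := tr
  refine ⟨Sum.inr_injective.comp hinj, fun j => hedge j, ?_⟩
  rintro (x | y) hx
  · rfl
  · exact hfix y (fun j hj => hx j (congrArg Sum.inr hj))

lemma bcast_merge {f1 g1 : ι₁ → St} {f2 g2 : ι₂ → St}
    (t1 : RBTrans U f1 .bcast g1) (t2 : RBTrans U f2 .bcast g2) :
    RBTrans U (Sum.elim f1 f2) .bcast (Sum.elim g1 g2) := by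
  rintro (x | y)
  · exact t1 x
  · exact t2 y

lemma Steps.liftR0 {f g : ι₂ → St} {b : ℕ} (d : Steps U f b g) (hb : b = 0)
    (h : ι₁ → St) : Steps U (Sum.elim h f) 0 (Sum.elim h g) := by
  induction d with
  | nil => exact .nil
  | rdz a procs d tr ih => exact (ih hb).rdz a _ (rdz_liftR tr h)
  | bcast d tr ih => omega

lemma Steps.liftL0 {f g : ι₁ → St} {b : ℕ} (d : Steps U f b g) (hb : b = 0)
    (h : ι₂ → St) : Steps U (Sum.elim f h) 0 (Sum.elim g h) := by
  induction d with
  | nil => exact .nil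
  | rdz a procs d tr ih => exact (ih hb).rdz a _ (rdz_liftL tr h)
  | bcast d tr ih => omega

lemma Steps.merge {f1 g1 : ι₁ → St} {b : ℕ} (d1 : Steps U f1 b g1) :
    ∀ {f2 g2 : ι₂ → St}, Steps U f2 b g2 →
      Steps U (Sum.elim f1 f2) b (Sum.elim g1 g2) := by
  induction d1 with
  | nil => intro f2 g2 d2; exact d2.liftR0 rfl f1
  | rdz a procs d tr ih =>
    intro f2 g2 d2
    exact (ih d2).rdz a _ (rdz_liftL tr g2)
  | bcast d tr ih =>
    intro f2 g2 d2
    obtain ⟨p, q, d2a, tb, d2c⟩ := d2.split _ rfl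
    exact (d2c.liftR0 rfl _).append0 ((ih d2a).bcast (bcast_merge tr tb)) rfl

lemma Steps.relabel {ι' : Type} (e : ι' ≃ ι) {f g : ι → St} {b : ℕ}
    (d : Steps U f b g) : Steps U (f ∘ e) b (g ∘ e) := by
  induction d with
  | nil => exact .nil
  | rdz a procs d tr ih =>
    refine ih.rdz a (e.symm ∘ procs) ?_
    obtain ⟨hinj, hedge, hfix⟩ := tr
    refine ⟨e.symm.injective.comp hinj, fun j => ?_, fun i hi => ?_⟩
    · simpa [Function.comp] using hedge j
    · exact hfix (e i) (fun j hj => hi j (by simp [Function.comp, hj]))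
  | bcast d tr ih => exact ih.bcast (fun i => tr (e i))

end Steps

/-! #### From step sequences to finite paths -/

section ToPath

variable {k : ℕ} {A St ι : Type} {U : RBTemplate k A St}

lemma natCard_lt_and (L : ℕ) (q : ℕ → Prop) [DecidablePred q] :
    Nat.card {t : ℕ // t < L ∧ q t} = ((Finset.range L).filter q).card := by
  rw [← Nat.card_eq_finsetCard]
  exact Nat.card_congr (Equiv.subtypeEquivRight (by
    intro t; simp [Finset.mem_filter, Finset.mem_range]))

lemma bcasts_eq_filter (π : FinPath U ι) [DecidablePred fun t => π.sync t = Sync.bcast] :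
    π.bcasts = ((Finset.range π.len).filter (fun t => π.sync t = Sync.bcast)).card := by
  rw [FinPath.bcasts, natCard_lt_and]

/-- Number of broadcasts of a single sync label. -/
def bCnt {k : ℕ} {A ι : Type} : Sync k A ι → ℕ
  | .bcast => 1
  | .rdz _ _ => 0

lemma snoc_finpath (π : FinPath U ι) {σ : Sync k A ι} {g' : ι → St}
    (tr : RBTrans U (π.conf π.len) σ g') :
    ∃ π' : FinPath U ι, π'.conf 0 = π.conf 0 ∧ π'.conf π'.len = g' ∧
      π'.bcasts = π.bcasts + bCnt σ := by
  classical
  refine ⟨⟨π.len + 1, fun t => if t = π.len + 1 then g' else π.conf t,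
    fun t => if t = π.len then σ else π.sync t, ?_⟩, ?_, ?_, ?_⟩
  · intro t ht
    rw [if_neg (show ¬ t = π.len + 1 by omega)]
    by_cases h : t = π.len
    · subst h
      rw [if_pos rfl, if_pos rfl]
      exact tr
    · rw [if_neg h, if_neg (show ¬ t + 1 = π.len + 1 by omega)]
      exact π.valid t (by omega)
  · simp only
    rw [if_neg (by omega)]
  · simp
  · rw [bcasts_eq_filter, bcasts_eq_filter]
    simp only
    rw [Finset.range_add_one, Finset.filter_insert]
    have hcongr : (Finset.range π.len).filter
        (fun t => (if t = π.len then σ else π.sync t) = Sync.bcast)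
        = (Finset.range π.len).filter (fun t => π.sync t = Sync.bcast) := by
      apply Finset.filter_congr
      intro t ht
      rw [Finset.mem_range] at ht
      rw [if_neg (by omega)]
    cases σ with
    | bcast =>
      rw [if_pos (by simp)]
      rw [Finset.card_insert_of_notMem (fun hc => Finset.notMem_range_self
        (Finset.mem_of_mem_filter _ hc))]
      rw [hcongr]
      rfl
    | rdz a procs =>
      rw [if_neg (by simp [bCnt])]
      rw [hcongr]
      rfl

lemma Steps.toFinPath {f : ι → St} {b : ℕ} {g : ι → St} (d : Steps U f b g) :
    ∃ π : FinPath U ι, π.conf 0 = f ∧ π.conf π.len = g ∧ π.bcasts = b := by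
  classical
  induction d with
  | nil =>
    refine ⟨⟨0, fun _ => f, fun _ => Sync.bcast,
      fun t ht => absurd ht (Nat.not_lt_zero t)⟩, rfl, rfl, ?_⟩
    rw [bcasts_eq_filter]
    simp
  | rdz a procs d tr ih =>
    obtain ⟨π, h0, hl, hb⟩ := ih
    rw [← hl] at tr
    obtain ⟨π', h0', hl', hb'⟩ := snoc_finpath π tr
    exact ⟨π', h0'.trans h0, hl', by rw [hb', hb]; rfl⟩
  | bcast d tr ih =>
    obtain ⟨π, h0, hl, hb⟩ := ih
    rw [← hl] at tr
    obtain ⟨π', h0', hl', hb'⟩ := snoc_finpath π tr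
    exact ⟨π', h0'.trans h0, hl', by rw [hb', hb]; rfl⟩

end ToPath

/-! #### Good runs and their combinations -/

section Core

variable {k : ℕ} {A S : Type}

lemma unwind_rdz_mem {P : RBTemplate k A S} {n m : ℕ} {s t : S} {ς : A × Fin k} {i : ℕ}
    (him : i ≤ m) (h : (s, Sum.inl ς, t) ∈ SatR P (compI P i)) :
    ((s, i), Sum.inl ς, (t, i)) ∈ (unwind P n m).R :=
  Or.inl ⟨s, t, ς, i, him, rfl, h⟩

lemma unwind_bcast_mem {P : RBTemplate k A S} {n m : ℕ} {s t : S} {i : ℕ}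
    (him : i ≤ m) (hs : s ∈ SatS P (compI P i)) (h : (s, Sum.inr (), t) ∈ P.R) :
    ((s, i), Sum.inr (), (t, compAt n m (i + 1))) ∈ (unwind P n m).R :=
  Or.inr ⟨s, t, i, him, rfl, hs, h⟩

/-- There is a run of some finite instance of the unwinding with exactly `b` broadcasts,
ending in an all-saturated configuration with a designated process in state `(s, comp b)`. -/
def GoodRun (P : RBTemplate k A S) (n₀ m b : ℕ) (s : S) : Prop :=
  ∃ (ι : Type) (_ : Fintype ι) (f g : ι → S × ℕ) (p : ι),
    (∀ i, f i ∈ (unwind P n₀ m).I) ∧ Steps (unwind P n₀ m) f b g ∧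
    (∀ i, (g i).2 = compAt n₀ m b ∧ (g i).1 ∈ SatS P (compI P (compAt n₀ m b))) ∧
    g p = (s, compAt n₀ m b)

/-- `n` designated processes ending in `(s, comp b)`. -/
def RepRun (P : RBTemplate k A S) (n₀ m b n : ℕ) (s : S) : Prop :=
  ∃ (ι : Type) (_ : Fintype ι) (f g : ι → S × ℕ),
    (∀ i, f i ∈ (unwind P n₀ m).I) ∧ Steps (unwind P n₀ m) f b g ∧
    (∀ i, (g i).2 = compAt n₀ m b ∧ (g i).1 ∈ SatS P (compI P (compAt n₀ m b))) ∧
    ∃ ρ : Fin n → ι, Function.Injective ρ ∧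
      ∀ i0, g (ρ i0) = (s, compAt n₀ m b)

/-- For every `j < q`, `n` designated processes ending in `(v j, comp b)`. -/
def FamRun (P : RBTemplate k A S) (n₀ m b : ℕ) (q n : ℕ) (v : Fin q → S) : Prop :=
  ∃ (ι : Type) (_ : Fintype ι) (f g : ι → S × ℕ),
    (∀ i, f i ∈ (unwind P n₀ m).I) ∧ Steps (unwind P n₀ m) f b g ∧
    (∀ i, (g i).2 = compAt n₀ m b ∧ (g i).1 ∈ SatS P (compI P (compAt n₀ m b))) ∧
    ∃ ρ : Fin q × Fin n → ι, Function.Injective ρ ∧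
      ∀ j i0, g (ρ (j, i0)) = (v j, compAt n₀ m b)

lemma emptyRun (P : RBTemplate k A S) (n₀ m b : ℕ) :
    ∃ (f g : PEmpty → S × ℕ),
      (∀ i, f i ∈ (unwind P n₀ m).I) ∧ Steps (unwind P n₀ m) f b g ∧
      (∀ i : PEmpty, (g i).2 = compAt n₀ m b ∧
        (g i).1 ∈ SatS P (compI P (compAt n₀ m b))) := by
  refine ⟨fun i => i.elim, fun i => i.elim, fun i => i.elim, ?_, fun i => i.elim⟩
  exact Steps.empty _ b

lemma repRun {P : RBTemplate k A S} {n₀ m b : ℕ} {s : S}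
    (hG : GoodRun P n₀ m b s) : ∀ n, RepRun P n₀ m b n s := by
  intro n
  induction n with
  | zero =>
    obtain ⟨f, g, hI, hS, hV⟩ := emptyRun P n₀ m b
    exact ⟨PEmpty, inferInstance, f, g, hI, hS, hV,
      fun i0 => i0.elim0, fun a => a.elim0, fun i0 => i0.elim0⟩
  | succ n ih =>
    obtain ⟨ι₁, inst1, f1, g1, p, hI1, d1, hV1, hp⟩ := hG
    obtain ⟨ι₂, inst2, f2, g2, hI2, d2, hV2, ρ₂, hρ₂, hval₂⟩ := ih
    refine ⟨ι₁ ⊕ ι₂, @instFintypeSum ι₁ ι₂ inst1 inst2, Sum.elim f1 f2, Sum.elim g1 g2,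
      ?_, d1.merge d2, ?_, ?_⟩
    · rintro (i | i)
      · exact hI1 i
      · exact hI2 i
    · rintro (i | i)
      · exact hV1 i
      · exact hV2 i
    · refine ⟨fun i0 => if h : (i0 : ℕ) < n then .inr (ρ₂ ⟨i0.1, h⟩) else .inl p, ?_, ?_⟩
      · intro a b hab
        dsimp only at hab
        by_cases ha : (a : ℕ) < n <;> by_cases hb : (b : ℕ) < n
        · rw [dif_pos ha, dif_pos hb] at hab
          have h2 := hρ₂ (Sum.inr_injective hab)
          have : a.1 = b.1 := congrArg (fun x : Fin n => x.1) h2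
          exact Fin.ext this
        · rw [dif_pos ha, dif_neg hb] at hab
          exact absurd hab (by simp)
        · rw [dif_neg ha, dif_pos hb] at hab
          exact absurd hab (by simp)
        · have : a.1 = b.1 := by omega
          exact Fin.ext this
      · intro i0
        show Sum.elim g1 g2 (if h : (i0 : ℕ) < n then _ else _) = _
        by_cases h : (i0 : ℕ) < n
        · rw [dif_pos h]
          exact hval₂ _
        · rw [dif_neg h]
          exact hp

lemma famRun {P : RBTemplate k A S} {n₀ m b : ℕ} :
    ∀ (q : ℕ) (v : Fin q → S), (∀ j, GoodRun P n₀ m b (v j)) →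
      ∀ n, FamRun P n₀ m b q n v := by
  intro q
  induction q with
  | zero =>
    intro v _ n
    obtain ⟨f, g, hI, hS, hV⟩ := emptyRun P n₀ m b
    exact ⟨PEmpty, inferInstance, f, g, hI, hS, hV,
      fun x => x.1.elim0, fun a => a.1.elim0, fun j => j.elim0⟩
  | succ q ih =>
    intro v hv n
    obtain ⟨ι₁, inst1, f1, g1, hI1, d1, hV1, ρ₁, hρ₁, hval₁⟩ := repRun (hv (Fin.last q)) n
    obtain ⟨ι₂, inst2, f2, g2, hI2, d2, hV2, ρ₂, hρ₂, hval₂⟩ :=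
      ih (v ∘ Fin.castSucc) (fun j => hv _) n
    refine ⟨ι₁ ⊕ ι₂, @instFintypeSum ι₁ ι₂ inst1 inst2, Sum.elim f1 f2, Sum.elim g1 g2,
      ?_, d1.merge d2, ?_, ?_⟩
    · rintro (i | i)
      · exact hI1 i
      · exact hI2 i
    · rintro (i | i)
      · exact hV1 i
      · exact hV2 i
    · refine ⟨fun x => if h : (x.1 : ℕ) < q then .inr (ρ₂ (⟨x.1.1, h⟩, x.2))
        else .inl (ρ₁ x.2), ?_, ?_⟩
      · rintro ⟨j, i0⟩ ⟨j', i0'⟩ hab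
        dsimp only at hab
        by_cases ha : (j : ℕ) < q <;> by_cases hb : (j' : ℕ) < q
        · rw [dif_pos ha, dif_pos hb] at hab
          have h2 := hρ₂ (Sum.inr_injective hab)
          have hj : j.1 = j'.1 := congrArg (fun y : Fin q × Fin n => y.1.1) h2
          have hi : i0 = i0' := congrArg Prod.snd h2
          exact Prod.ext (Fin.ext hj) hi
        · rw [dif_pos ha, dif_neg hb] at hab
          exact absurd hab (by simp)
        · rw [dif_neg ha, dif_pos hb] at hab
          exact absurd hab (by simp)
        · rw [dif_neg ha, dif_neg hb] at hab
          have hi : i0 = i0' := hρ₁ (Sum.inl_injective hab)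
          have hj : j.1 = j'.1 := by
            have := j.2; have := j'.2; omega
          exact Prod.ext (Fin.ext hj) hi
      · rintro j i0
        by_cases h : (j : ℕ) < q
        · show Sum.elim g1 g2 (if h' : (j : ℕ) < q then _ else _) = _
          rw [dif_pos h]
          have := hval₂ ⟨j.1, h⟩ i0
          simpa using this
        · show Sum.elim g1 g2 (if h' : (j : ℕ) < q then _ else _) = _
          rw [dif_neg h]
          have hj : j = Fin.last q := by
            apply Fin.ext; have := j.2; simp; omega
          rw [hj]
          exact hval₁ i0

end Core

/-! #### The main claim: every saturated state is reachable by a good run -/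

section Claim

variable {k : ℕ} {A S : Type}

lemma claim_step {P : RBTemplate k A S} {n₀ m : ℕ} (hL : IsLasso P n₀ m) (b : ℕ)
    (hbase : ∀ s ∈ compI P (compAt n₀ m b), GoodRun P n₀ m b s) :
    ∀ s ∈ SatS P (compI P (compAt n₀ m b)), GoodRun P n₀ m b s := by
  classical
  set J := compI P (compAt n₀ m b) with hJ
  set c := compAt n₀ m b with hc
  have hcm : c ≤ m := compAt_le hL.1 b
  intro s hs
  have hQ : SatClosed P J {s | s ∈ SatS P J ∧ GoodRun P n₀ m b s} := by
    constructor
    · intro x hx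
      exact ⟨(satS_closed P J).1 hx, hbase x hx⟩
    · intro x a h t hx he hside
      have hside' : ∀ l : Fin k, ∃ s' t' : S,
          s' ∈ SatS P J ∧ (s', Sum.inl (a, l), t') ∈ P.R := by
        intro l
        obtain ⟨s', t', hQ', he'⟩ := hside l
        exact ⟨s', t', hQ'.1, he'⟩
      have htS : t ∈ SatS P J := (satS_closed P J).2 x a h t hx.1 he hside'
      refine ⟨htS, ?_⟩
      choose xs ys hxsQ hes using hside
      set X : Fin k → S := fun l => if l = h then x else xs l with hX
      set Y : Fin k → S := fun l => if l = h then t else ys l with hY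
      have hXS : ∀ l, X l ∈ SatS P J := by
        intro l
        by_cases hl : l = h
        · rw [hX]; simp only [if_pos hl]; exact hx.1
        · rw [hX]; simp only [if_neg hl]; exact (hxsQ l).1
      have hXG : ∀ l, GoodRun P n₀ m b (X l) := by
        intro l
        by_cases hl : l = h
        · rw [hX]; simp only [if_pos hl]; exact hx.2
        · rw [hX]; simp only [if_neg hl]; exact (hxsQ l).2
      have hXE : ∀ l, (X l, Sum.inl (a, l), Y l) ∈ P.R := by
        intro l
        by_cases hl : l = h
        · subst hl; rw [hX, hY]; simp only [if_pos rfl]; exact he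
        · rw [hX, hY]; simp only [if_neg hl]; exact hes l
      obtain ⟨ι, inst, f, g, hInit, d, hInv, ρ, hρ, hval⟩ :=
        famRun k X hXG 1
      set procs : Fin k → ι := fun l => ρ (l, 0) with hprocsdef
      have hprocs : Function.Injective procs := by
        intro l l' hll
        have := hρ hll
        exact congrArg Prod.fst this
      set g' : ι → S × ℕ := fun i =>
        if hex : ∃ l, procs l = i then (Y hex.choose, c) else g i with hg'def
      have hg' : ∀ l, g' (procs l) = (Y l, c) := by
        intro l
        have hex : ∃ l', procs l' = procs l := ⟨l, rfl⟩
        have h1 : g' (procs l) = (Y hex.choose, c) := dif_pos hex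
        rw [h1, hprocs hex.choose_spec]
      have hgval : ∀ l, g (procs l) = (X l, c) := fun l => hval l 0
      have hside'' : ∀ l' : Fin k, ∃ s' t' : S,
          s' ∈ SatS P J ∧ (s', Sum.inl (a, l'), t') ∈ P.R :=
        fun l' => ⟨X l', Y l', hXS l', hXE l'⟩
      have tr : RBTrans (unwind P n₀ m) g (.rdz a procs) g' := by
        refine ⟨hprocs, fun j => ?_, fun i hi => ?_⟩
        · rw [hgval j, hg' j]
          exact unwind_rdz_mem hcm (mem_satR (hXS j) (hXE j) hside'')
        · exact dif_neg (show ¬ ∃ l, procs l = i from fun hex => hex.elim fun l hl => hi l hl)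
      have hInv' : ∀ i, (g' i).2 = c ∧ (g' i).1 ∈ SatS P J := by
        intro i
        by_cases hex : ∃ l, procs l = i
        · have h1 : g' i = (Y hex.choose, c) := dif_pos hex
          rw [h1]
          exact ⟨rfl, (satS_closed P J).2 (X hex.choose) a hex.choose (Y hex.choose)
            (hXS _) (hXE _) hside''⟩
        · have h1 : g' i = g i := dif_neg hex
          rw [h1]
          exact hInv i
      refine ⟨ι, inst, f, g', procs h, hInit, d.rdz a procs tr, hInv', ?_⟩
      rw [hg' h]
      have hYh : Y h = t := if_pos rfl
      rw [hYh]
  exact (satS_min hQ hs).2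

lemma goodRun_of_mem {P : RBTemplate k A S} (hTot : P.BTotal) {n₀ m : ℕ}
    (hL : IsLasso P n₀ m) :
    ∀ b, ∀ s ∈ SatS P (compI P (compAt n₀ m b)), GoodRun P n₀ m b s := by
  classical
  have hper : compI P n₀ = compI P (m + 1) := hL.2.1
  intro b
  induction b with
  | zero =>
    apply claim_step hL 0
    intro s hsI
    rw [compAt_zero] at hsI
    refine ⟨PUnit, inferInstance, fun _ => (s, 0), fun _ => (s, 0), PUnit.unit,
      fun _ => ⟨hsI, rfl⟩, .nil, fun _ => ?_, by rw [compAt_zero]⟩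
    constructor
    · rw [compAt_zero]
    · rw [compAt_zero]
      exact (satS_closed P _).1 hsI
  | succ b ih =>
    apply claim_step hL (b + 1)
    intro s hsI
    have e1 : compI P (compAt n₀ m (b + 1)) = compI P (b + 1) :=
      compI_compAt P hL.1 hper (b + 1)
    have e0 : compI P (compAt n₀ m b) = compI P b := compI_compAt P hL.1 hper b
    rw [e1] at hsI
    obtain ⟨h0, hh0, hbe⟩ := hsI
    rw [← e0] at hh0
    obtain ⟨ι, inst, f, g, p, hInit, d, hInv, hgp⟩ := ih h0 hh0
    set c := compAt n₀ m b with hc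
    set c' := compAt n₀ m (b + 1) with hc'
    have hcm : c ≤ m := compAt_le hL.1 b
    have hcc : compAt n₀ m (c + 1) = c' := compAt_succ_eq hL.1 b
    have hc'E : compI P c' = compI P (c + 1) := by
      rw [← hcc]
      exact compI_compAt P hL.1 hper (c + 1)
    choose tgt htgt using fun i => hTot (g i).1
    set g' : ι → S × ℕ := fun i => if i = p then (s, c') else (tgt i, c') with hg'def
    have tr : RBTrans (unwind P n₀ m) g .bcast g' := by
      intro i
      have hgi : g i = ((g i).1, c) := by rw [← (hInv i).1]
      by_cases hip : i = p
      · subst hip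
        have hgp1 : (g i).1 = h0 := congrArg Prod.fst hgp
        rw [hgi, hgp1, hg'def]
        simp only [if_pos rfl]
        rw [← hcc]
        exact unwind_bcast_mem hcm hh0 hbe
      · rw [hgi, hg'def]
        simp only [if_neg hip]
        rw [← hcc]
        exact unwind_bcast_mem hcm (hInv i).2 (htgt i)
    have hInv' : ∀ i, (g' i).2 = c' ∧ (g' i).1 ∈ SatS P (compI P c') := by
      intro i
      by_cases hip : i = p
      · have h1 : g' i = (s, c') := if_pos hip
        rw [h1]
        refine ⟨rfl, (satS_closed P _).1 ?_⟩
        rw [e1]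
        exact ⟨h0, by rwa [e0] at hh0, hbe⟩
      · have h1 : g' i = (tgt i, c') := if_neg hip
        rw [h1]
        refine ⟨rfl, (satS_closed P _).1 ?_⟩
        rw [hc'E]
        exact ⟨(g i).1, (hInv i).2, htgt i⟩
    exact ⟨ι, inst, f, g', p, hInit, d.bcast tr, hInv', if_pos rfl⟩

end Claim

/-- **Loading.** For all `b, n` there is a finite run of some system
`(P^⊸)^N` with exactly `b` broadcast transitions whose final configuration has at
least `n` processes in every state of the component `P_(comp b)`. -/
theorem loading
    {k : ℕ} {A S : Type} [Fintype A] [Fintype S] (hk : 2 ≤ k)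
    (P : RBTemplate k A S) (hTot : P.BTotal) (hU : P.UniqLab)
    (n₀ m : ℕ) (hL : IsLasso P n₀ m) (b n : ℕ) :
    ∃ (N : ℕ) (π : FinPath (unwind P n₀ m) (Fin N)), π.IsRun ∧ π.bcasts = b ∧
      ∀ s : S, s ∈ SatS P (compI P (compAt n₀ m b)) →
        n ≤ Nat.card {i : Fin N // π.conf π.len i = (s, compAt n₀ m b)} := by
  classical
  set c := compAt n₀ m b with hc
  set T : Finset S := (SatS P (compI P c)).toFinite.toFinset with hT
  set L : List S := T.toList with hLst
  have hv : ∀ j : Fin L.length, GoodRun P n₀ m b (L.get j) := by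
    intro j
    apply goodRun_of_mem hTot hL b
    have h1 : L.get j ∈ T := by
      rw [← Finset.mem_toList]
      exact List.get_mem _ _
    exact (Set.Finite.mem_toFinset _).mp h1
  obtain ⟨ι, inst, f, g, hInit, d, _hInv, ρ, hρ, hval⟩ :=
    famRun L.length (fun j => L.get j) hv n
  haveI := inst
  let N := Fintype.card ι
  let e : Fin N ≃ ι := (Fintype.equivFin ι).symm
  obtain ⟨π, h0, hl, hb⟩ := (d.relabel e).toFinPath
  refine ⟨N, π, ?_, hb, ?_⟩
  · intro i
    rw [h0]
    exact hInit (e i)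
  · intro s hs
    have hsT : s ∈ T := (Set.Finite.mem_toFinset _).mpr hs
    obtain ⟨j, hj⟩ := List.mem_iff_get.mp (Finset.mem_toList.mpr hsT)
    let F : Fin n → {i : Fin N // π.conf π.len i = (s, c)} := fun i0 =>
      ⟨e.symm (ρ (j, i0)), by
        rw [hl]
        show g (e (e.symm _)) = _
        rw [Equiv.apply_symm_apply, hval j i0]
        show (L.get j, c) = (s, c)
        rw [hj]⟩
    have hF : Function.Injective F := by
      intro a b hab
      have h1 : e.symm (ρ (j, a)) = e.symm (ρ (j, b)) := congrArg Subtype.val hab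
      have h2 := hρ (e.symm.injective h1)
      exact congrArg Prod.snd h2
    calc n = Nat.card (Fin n) := by simp
      _ ≤ _ := Nat.card_le_card_of_injective F hF
end

section
/- Let P⋆ be the RB-template with k = 2, states {p,q}, initial states {p}, one rendezvous action a, rendezvous edges e₁ = (p,a_1,p) and e₂ = (p,a_2,q), and broadcast edges b_p = (p,𝔟,p) and b_q = (q,𝔟,p). Then exec_inf(P⋆) is exactly the set of infinite edge sequences of the form e₁^{n_1} e₂^{m_1} β_1 e₁^{n_2} e₂^{m_2} β_2 …, where for every i ∈ ℕ: n_i ∈ ℕ_0, m_i ∈ {0,1}, β_i = b_q if m_i = 1 and β_i = b_p if m_i = 0, and limsup_{i→∞} n_i < ∞. -/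
/-! ### The witness template `P⋆` (Figure 2):
states `p = false`, `q = true`; one rendezvous action; `k = 2`;
rendezvous edges `(p, a₁, p)`, `(p, a₂, q)`; broadcast edges `(p, 𝔟, p)`, `(q, 𝔟, p)`. -/

def Pstar : RBTemplate 2 Unit Bool where
  I := {false}
  R := {(false, Sum.inl ((), (0 : Fin 2)), false),
        (false, Sum.inl ((), (1 : Fin 2)), true),
        (false, Sum.inr (), false),
        (true, Sum.inr (), false)}

/-- The rendezvous edge `(p, a₁, p)` of `P⋆`. -/
def e₁ : EdgeT 2 Unit Bool := (false, Sum.inl ((), (0 : Fin 2)), false)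

/-- The rendezvous edge `(p, a₂, q)` of `P⋆`. -/
def e₂ : EdgeT 2 Unit Bool := (false, Sum.inl ((), (1 : Fin 2)), true)

/-- The broadcast edge `(p, 𝔟, p)` of `P⋆`. -/
def bP : EdgeT 2 Unit Bool := (false, Sum.inr (), false)

/-- The broadcast edge `(q, 𝔟, p)` of `P⋆`. -/
def bQ : EdgeT 2 Unit Bool := (true, Sum.inr (), false)

section
lemma pstar_mem_iff (e : EdgeT 2 Unit Bool) :
    e ∈ Pstar.R ↔ e = e₁ ∨ e = e₂ ∨ e = bP ∨ e = bQ := by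
  simp [Pstar, e₁, e₂, bP, bQ]

lemma e1_mem : e₁ ∈ Pstar.R := by simp [Pstar, e₁]
lemma e2_mem : e₂ ∈ Pstar.R := by simp [Pstar, e₂]
lemma bP_mem : bP ∈ Pstar.R := by simp [Pstar, bP]
lemma bQ_mem : bQ ∈ Pstar.R := by simp [Pstar, bQ]

lemma rdz_edge_false {s t : Bool} {j : Fin 2} (h : (s, Sum.inl ((), j), t) ∈ Pstar.R) :
    s = false ∧ ((j = 0 ∧ t = false) ∨ (j = 1 ∧ t = true)) := by
  simp [Pstar] at h
  rcases h with ⟨h1,h2,h3⟩|⟨h1,h2,h3⟩ <;> simp_all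

lemma bcast_edge {s t : Bool} (h : (s, Sum.inr (), t) ∈ Pstar.R) : t = false := by
  simp [Pstar] at h; tauto
end
open Matrix in
lemma inj2 {α : Type*} {x y : α} (h : x ≠ y) : Function.Injective ![x, y] := by
  intro a b hab
  fin_cases a <;> fin_cases b <;> simp_all

/-- block index -/
noncomputable def blkOf (B : ℕ → ℕ) (t : ℕ) : ℕ := sInf {i | t < B (i+1)}

noncomputable def confOf (nn B : ℕ → ℕ) (M : ℕ) (t : ℕ) (j : Fin (M+2)) : Bool :=
  if j = 0 then decide (t - B (blkOf B t) = nn (blkOf B t) + 1)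
  else decide (j.val ≤ min (t - B (blkOf B t)) (nn (blkOf B t)))

/-- clamp a natural into `Fin (M+2)` -/
def finClamp (M x : ℕ) : Fin (M+2) := ⟨min x (M+1), by omega⟩

noncomputable def syncOf (nn mm B : ℕ → ℕ) (M : ℕ) (t : ℕ) : Sync 2 Unit (Fin (M+2)) :=
  if t - B (blkOf B t) < nn (blkOf B t) then
    Sync.rdz () ![0, finClamp M (t - B (blkOf B t) + 1)]
  else if t - B (blkOf B t) < nn (blkOf B t) + mm (blkOf B t) then
    Sync.rdz () ![finClamp M (M+1), 0]
  else Sync.bcast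

section blk
variable {nn mm B : ℕ → ℕ}
  (hB0 : B 0 = 0) (hBs : ∀ i, B (i+1) = B i + nn i + mm i + 1)

include hBs in
lemma B_strictMono : StrictMono B := by
  apply strictMono_nat_of_lt_succ
  intro i; rw [hBs]; omega

include hBs in
lemma blkOf_eq {i r : ℕ} (hr : r ≤ nn i + mm i) : blkOf B (B i + r) = i := by
  have hsm := B_strictMono hBs
  have hne : (B i + r) < B (i+1) := by rw [hBs]; omega
  have h1 : blkOf B (B i + r) ∈ {k | B i + r < B (k+1)} :=
    Nat.sInf_mem ⟨i, hne⟩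
  have h2 : blkOf B (B i + r) ≤ i := Nat.sInf_le hne
  rcases Nat.lt_or_ge (blkOf B (B i + r)) i with h | h
  · exfalso
    have : B (blkOf B (B i + r) + 1) ≤ B i := hsm.monotone (by omega)
    simp only [Set.mem_setOf_eq] at h1
    omega
  · omega

include hB0 hBs in
lemma blkOf_spec (t : ℕ) :
    B (blkOf B t) ≤ t ∧ t - B (blkOf B t) ≤ nn (blkOf B t) + mm (blkOf B t) := by
  have hsm := B_strictMono hBs
  have hne : ∃ i, t < B (i+1) := ⟨t, lt_of_lt_of_le (Nat.lt_succ_self t) (hsm.le_apply)⟩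
  have h1 : t < B (blkOf B t + 1) := Nat.sInf_mem hne
  have h2 : B (blkOf B t) ≤ t := by
    rcases Nat.eq_zero_or_pos (blkOf B t) with h | h
    · rw [h, hB0]; exact Nat.zero_le t
    · by_contra hc
      push_neg at hc
      have := Nat.notMem_of_lt_sInf (show blkOf B t - 1 < blkOf B t by omega) (s := {i | t < B (i+1)})
      simp only [Set.mem_setOf_eq, not_lt] at this
      have : B (blkOf B t - 1 + 1) ≤ t := this
      rw [show blkOf B t - 1 + 1 = blkOf B t by omega] at this
      omega
  rw [hBs] at h1
  exact ⟨h2, by omega⟩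

end blk
section constr
variable {nn mm B : ℕ → ℕ} {M : ℕ}
  (hB0 : B 0 = 0) (hBs : ∀ i, B (i+1) = B i + nn i + mm i + 1)

include hBs in
lemma confOf_eval {i r : ℕ} (hr : r ≤ nn i + mm i) (j : Fin (M+2)) :
    confOf nn B M (B i + r) j =
      if j = 0 then decide (r = nn i + 1) else decide (j.val ≤ min r (nn i)) := by
  unfold confOf
  rw [blkOf_eq hBs hr, Nat.add_sub_cancel_left]

include hBs in
lemma syncOf_eval {i r : ℕ} (hr : r ≤ nn i + mm i) :
    syncOf nn mm B M (B i + r) =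
      if r < nn i then
        Sync.rdz () ![0, finClamp M (r + 1)]
      else if r < nn i + mm i then Sync.rdz () ![finClamp M (M+1), 0]
      else Sync.bcast := by
  unfold syncOf
  rw [blkOf_eq hBs hr, Nat.add_sub_cancel_left]

end constr
lemma fin2_choose_eq_zero {α : Type*} {x : α} {procs : Fin 2 → α} (h : ∃ j, procs j = x)
    (hne : procs 1 ≠ x) : Classical.choose h = 0 := by
  have hcs := Classical.choose_spec h
  have hv : (Classical.choose h).val = 0 ∨ (Classical.choose h).val = 1 := by omega
  rcases hv with hv | hv
  · exact Fin.ext hv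
  · exfalso; apply hne; rw [← hcs]; congr 1; exact (Fin.ext hv).symm

lemma fin2_choose_eq_one {α : Type*} {x : α} {procs : Fin 2 → α} (h : ∃ j, procs j = x)
    (hne : procs 0 ≠ x) : Classical.choose h = 1 := by
  have hcs := Classical.choose_spec h
  have hv : (Classical.choose h).val = 0 ∨ (Classical.choose h).val = 1 := by omega
  rcases hv with hv | hv
  · exfalso; apply hne; rw [← hcs]; congr 1; exact (Fin.ext hv).symm
  · exact Fin.ext hv

lemma blocks_mem (w : ℕ → EdgeT 2 Unit Bool) (nn mm B : ℕ → ℕ) (M : ℕ)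
    (hB0 : B 0 = 0) (hmm : ∀ i, mm i ≤ 1)
    (hBs : ∀ i, B (i+1) = B i + nn i + mm i + 1)
    (he1 : ∀ i t, t < nn i → w (B i + t) = e₁)
    (he2 : ∀ i t, t < mm i → w (B i + nn i + t) = e₂)
    (hbr : ∀ i, w (B i + nn i + mm i) = if mm i = 1 then bQ else bP)
    (hM : ∀ i, nn i ≤ M) :
    w ∈ execInf Pstar := by
  classical
  have key : ∀ t, RBTrans Pstar (confOf nn B M t) (syncOf (nn:=nn) mm B M t)
        (confOf nn B M (t+1)) ∧
      edgeAt (confOf nn B M t) (confOf nn B M (t+1)) (syncOf (nn:=nn) mm B M t) 0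
        = some (w t) := by
    intro t
    obtain ⟨hle, hr⟩ := blkOf_spec hB0 hBs t
    set i := blkOf B t with hi
    set r := t - B i with hrdef
    have ht : B i + r = t := by omega
    have hct : confOf nn B M t = fun j =>
        if j = 0 then decide (r = nn i + 1) else decide (j.val ≤ min r (nn i)) := by
      rw [← ht]; exact funext (confOf_eval hBs hr)
    have hsy0 : syncOf (nn:=nn) mm B M t =
        if r < nn i then Sync.rdz () ![0, finClamp M (r + 1)]
        else if r < nn i + mm i then Sync.rdz () ![finClamp M (M+1), 0]
        else Sync.bcast := by
      rw [← ht]; exact syncOf_eval hBs hr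
    by_cases h1 : r < nn i
    · -- e₁-rendezvous step
      have hnM : nn i ≤ M := hM i
      have hct' : confOf nn B M (t+1) = fun j =>
          if j = 0 then decide (r + 1 = nn i + 1) else decide (j.val ≤ min (r+1) (nn i)) := by
        rw [show t + 1 = B i + (r+1) by omega]
        exact funext (confOf_eval hBs (by omega))
      have hsy : syncOf (nn:=nn) mm B M t = Sync.rdz () ![0, finClamp M (r + 1)] := by
        rw [hsy0, if_pos h1]
      have hpv : (finClamp M (r+1)).val = r + 1 := by
        simp only [finClamp]; omega
      have hp0 : finClamp M (r+1) ≠ 0 := by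
        intro hc
        have := congrArg Fin.val hc
        rw [hpv] at this
        simp at this
      have d1 : decide (r = nn i + 1) = false := decide_eq_false (by omega)
      have d2 : decide (r + 1 = nn i + 1) = false := decide_eq_false (by omega)
      constructor
      · rw [hsy]
        refine ⟨inj2 (fun hc => hp0 hc.symm), ?_, ?_⟩
        · rw [Fin.forall_fin_two]
          constructor
          · simp only [Matrix.cons_val_zero, hct, hct', if_pos rfl, d1, d2]
            exact e1_mem
          · have d3 : decide (r + 1 ≤ min r (nn i)) = false := decide_eq_false (by omega)
            have d4 : decide (r + 1 ≤ min (r+1) (nn i)) = true := decide_eq_true (by omega)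
            simp only [Matrix.cons_val_one, Matrix.head_cons, Matrix.cons_val_zero, hct, hct', if_neg hp0, hpv, d3, d4]
            exact e2_mem
        · intro x hx
          have hx0 : x ≠ 0 := fun hc => hx 0 (by simp [hc])
          have hxv : x.val ≠ r + 1 := by
            intro hc
            apply hx 1
            simp only [Matrix.cons_val_one, Matrix.head_cons, Matrix.cons_val_zero]
            exact Fin.ext (by rw [hpv, hc])
          simp only [hct, hct', if_neg hx0]
          exact decide_eq_decide.mpr (by omega)
      · rw [hsy]
        have hex : ∃ j, (![0, finClamp M (r+1)] : Fin 2 → Fin (M+2)) j = 0 := ⟨0, rfl⟩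
        have hch : Classical.choose hex = 0 := by
          apply fin2_choose_eq_zero
          simp only [Matrix.cons_val_one, Matrix.head_cons]
          exact hp0
        simp only [edgeAt]
        rw [dif_pos hex, hch]
        have hw : w t = e₁ := by rw [← ht]; exact he1 i r h1
        rw [hw]
        simp only [hct, hct', if_pos rfl, d1, d2]
        rfl
    · by_cases h2 : r < nn i + mm i
      · -- e₂-rendezvous step: mm i = 1, r = nn i
        have hmi : mm i = 1 := by have := hmm i; omega
        have hrn : r = nn i := by omega
        have hct' : confOf nn B M (t+1) = fun j =>
            if j = 0 then decide (r + 1 = nn i + 1) else decide (j.val ≤ min (r+1) (nn i)) := by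
          rw [show t + 1 = B i + (r+1) by omega]
          exact funext (confOf_eval hBs (by omega))
        have hsy : syncOf (nn:=nn) mm B M t = Sync.rdz () ![finClamp M (M+1), 0] := by
          rw [hsy0, if_neg h1, if_pos h2]
        have hpv : (finClamp M (M+1)).val = M + 1 := by
          simp only [finClamp]; omega
        have hp0 : finClamp M (M+1) ≠ 0 := by
          intro hc
          have := congrArg Fin.val hc
          rw [hpv] at this
          simp at this
        have d1 : decide (r = nn i + 1) = false := decide_eq_false (by omega)
        have d2 : decide (r + 1 = nn i + 1) = true := decide_eq_true (by omega)
        have d3 : decide (M + 1 ≤ min r (nn i)) = false :=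
          decide_eq_false (by have := hM i; omega)
        have d4 : decide (M + 1 ≤ min (r+1) (nn i)) = false :=
          decide_eq_false (by have := hM i; omega)
        constructor
        · rw [hsy]
          refine ⟨inj2 hp0, ?_, ?_⟩
          · rw [Fin.forall_fin_two]
            constructor
            · simp only [Matrix.cons_val_zero, hct, hct', if_neg hp0, hpv, d3, d4]
              exact e1_mem
            · simp only [Matrix.cons_val_one, Matrix.head_cons, hct, hct', if_pos rfl, d1, d2]
              exact e2_mem
          · intro x hx
            have hx0 : x ≠ 0 := fun hc => hx 1 (by simp [hc])
            simp only [hct, hct', if_neg hx0]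
            exact decide_eq_decide.mpr (by omega)
        · rw [hsy]
          have hex : ∃ j, (![finClamp M (M+1), 0] : Fin 2 → Fin (M+2)) j = 0 := ⟨1, rfl⟩
          have hch : Classical.choose hex = 1 := by
            apply fin2_choose_eq_one
            simp only [Matrix.cons_val_zero]
            exact hp0
          simp only [edgeAt]
          rw [dif_pos hex, hch]
          have hw : w t = e₂ := by
            rw [show t = B i + nn i + 0 by omega]
            exact he2 i 0 (by omega)
          rw [hw]
          simp only [hct, hct', if_pos rfl, d1, d2]
          rfl
      · -- broadcast step: r = nn i + mm i
        have hrn : r = nn i + mm i := by omega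
        have hct' : confOf nn B M (t+1) = fun j =>
            if j = 0 then decide (0 = nn (i+1) + 1) else decide (j.val ≤ min 0 (nn (i+1))) := by
          rw [show t + 1 = B (i+1) + 0 by rw [hBs]; omega]
          exact funext (confOf_eval hBs (by omega))
        have hsy : syncOf (nn:=nn) mm B M t = Sync.bcast := by
          rw [hsy0, if_neg h1, if_neg h2]
        have hg : ∀ x : Fin (M+2), confOf nn B M (t+1) x = false := by
          intro x
          rw [hct']
          by_cases hx0 : x = 0
          · simp [hx0]
          · have hxv : x.val ≠ 0 := by
              intro hc; exact hx0 (Fin.ext hc)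
            simp only [if_neg hx0]
            exact decide_eq_false (by omega)
        constructor
        · rw [hsy]
          intro x
          rw [hg x]
          rcases Bool.eq_false_or_eq_true (confOf nn B M t x) with hb | hb <;> rw [hb]
          · exact bQ_mem
          · exact bP_mem
        · rw [hsy]
          simp only [edgeAt]
          rw [hg 0]
          have hc0 : confOf nn B M t 0 = decide (mm i = 1) := by
            rw [hct]
            simp only [if_pos rfl]
            exact decide_eq_decide.mpr (by omega)
          rw [hc0]
          have hw : w t = if mm i = 1 then bQ else bP := by
            rw [show t = B i + nn i + mm i by omega]
            exact hbr i
          rw [hw]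
          by_cases hmi : mm i = 1
          · rw [if_pos hmi, hmi]
            rfl
          · rw [if_neg hmi]
            have : decide (mm i = 1) = false := decide_eq_false hmi
            rw [this]
            rfl
  refine ⟨M+1, ⟨confOf nn B M, syncOf (nn:=nn) mm B M, fun t => (key t).1⟩, ?_, id,
    strictMono_id, ?_, fun m => (key m).2⟩
  · intro j
    show confOf nn B M 0 j ∈ Pstar.I
    have h0 : confOf nn B M 0 j = false := by
      rw [show (0:ℕ) = B 0 + 0 by omega, confOf_eval hBs (Nat.zero_le _)]
      by_cases hj : j = 0
      · simp [hj]
      · rw [if_neg hj]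
        have : j.val ≠ 0 := fun hc => hj (Fin.ext hc)
        exact decide_eq_false (by omega)
    rw [h0]
    exact rfl
  · intro t
    constructor
    · intro _; exact ⟨t, rfl⟩
    · intro _
      show Sync.Moved (syncOf (nn:=nn) mm B M t) 0
      unfold syncOf
      split_ifs with hh1 hh2
      · exact ⟨0, rfl⟩
      · exact ⟨1, rfl⟩
      · trivial
lemma forward_dir {n : ℕ} (p : InfPath Pstar (Fin (n+1))) (hrun : p.IsRun)
    (w : ℕ → EdgeT 2 Unit Bool) (ι : ℕ → ℕ) (hmono : StrictMono ι)
    (hmoved : ∀ t, (p.sync t).Moved 0 ↔ ∃ m, ι m = t)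
    (hedge : ∀ m, edgeAt (p.conf (ι m)) (p.conf (ι m + 1)) (p.sync (ι m)) 0 = some (w m)) :
    ∃ nn mm B : ℕ → ℕ,
        B 0 = 0 ∧
        (∀ i, mm i ≤ 1) ∧
        (∀ i, B (i + 1) = B i + nn i + mm i + 1) ∧
        (∀ i t, t < nn i → w (B i + t) = e₁) ∧
        (∀ i t, t < mm i → w (B i + nn i + t) = e₂) ∧
        (∀ i, w (B i + nn i + mm i) = if mm i = 1 then bQ else bP) ∧
        (∃ N, ∀ᶠ i in Filter.atTop, nn i ≤ N) := by
  classical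
  -- basic edge facts
  have hAsrc : ∀ m, (w m).1 = p.conf (ι m) 0 ∧ (w m).2.2 = p.conf (ι m + 1) 0 ∧
      w m ∈ Pstar.R := by
    intro m
    have hv := p.valid (ι m)
    have he := hedge m
    cases hs : p.sync (ι m) with
    | bcast =>
      rw [hs] at he hv
      simp only [edgeAt] at he
      have heq := Option.some.inj he
      exact ⟨by rw [← heq], by rw [← heq], by rw [← heq]; exact hv 0⟩
    | rdz a procs =>
      rw [hs] at he hv
      simp only [edgeAt] at he
      by_cases hex : ∃ j, procs j = 0
      · rw [dif_pos hex] at he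
        have heq := Option.some.inj he
        obtain ⟨hinj, hedges, hframe⟩ := hv
        have hsp := Classical.choose_spec hex
        have hR := hedges (Classical.choose hex)
        rw [hsp] at hR
        exact ⟨by rw [← heq], by rw [← heq], by rw [← heq]; exact hR⟩
      · rw [dif_neg hex] at he
        exact absurd he (by simp)
  have hAbc : ∀ m, p.sync (ι m) = Sync.bcast → (w m).2.1 = Sum.inr () := by
    intro m hs
    have he := hedge m
    rw [hs] at he
    simp only [edgeAt] at he
    rw [← Option.some.inj he]
  have hArdz : ∀ m a procs, p.sync (ι m) = Sync.rdz a procs →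
      ∃ j, procs j = 0 ∧ (w m).2.1 = Sum.inl (a, j) := by
    intro m a procs hs
    have he := hedge m
    rw [hs] at he
    simp only [edgeAt] at he
    by_cases hex : ∃ j, procs j = 0
    · rw [dif_pos hex] at he
      exact ⟨Classical.choose hex, Classical.choose_spec hex, by rw [← Option.some.inj he]⟩
    · rw [dif_neg hex] at he
      exact absurd he (by simp)
  have hclass : ∀ m, w m = e₁ ∨ w m = e₂ ∨ w m = bP ∨ w m = bQ :=
    fun m => (pstar_mem_iff _).mp (hAsrc m).2.2
  -- state constancy between moves of process 0
  have hconstI : ∀ t t', t ≤ t' → (∀ u, t ≤ u → u < t' → ¬ (p.sync u).Moved 0) →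
      p.conf t 0 = p.conf t' 0 := by
    intro t t' htt' hnm
    induction t', htt' using Nat.le_induction with
    | base => rfl
    | succ t' htt' ih =>
      have h1 := ih (fun u hu1 hu2 => hnm u hu1 (by omega))
      rw [h1]
      cases hs : p.sync t' with
      | bcast => exact absurd (by rw [hs]; trivial) (hnm t' (by omega) (by omega))
      | rdz a procs =>
        have hv := p.valid t'
        rw [hs] at hv
        have hnp : ∀ j, procs j ≠ 0 := by
          intro j hj
          exact hnm t' (by omega) (by omega) (by rw [hs]; exact ⟨j, hj⟩)
        exact (hv.2.2 0 hnp).symm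
  have hgap : ∀ m, p.conf (ι m + 1) 0 = p.conf (ι (m+1)) 0 := by
    intro m
    apply hconstI
    · exact hmono (by omega)
    · intro u hu1 hu2 hmv
      obtain ⟨m', hm'⟩ := (hmoved u).mp hmv
      have h1 := hmono.lt_iff_lt.mp (show ι m < ι m' by omega)
      have h2 := hmono.lt_iff_lt.mp (show ι m' < ι (m+1) by omega)
      omega
  have hchain : ∀ m, (w (m+1)).1 = (w m).2.2 := by
    intro m
    rw [(hAsrc (m+1)).1, (hAsrc m).2.1, hgap m]
  have hw0 : (w 0).1 = false := by
    have h00 : p.conf 0 0 = false := hrun 0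
    have hc0 : p.conf 0 0 = p.conf (ι 0) 0 := by
      apply hconstI 0 (ι 0) (Nat.zero_le _)
      intro u hu1 hu2 hmv
      obtain ⟨m', hm'⟩ := (hmoved u).mp hmv
      have := hmono.lt_iff_lt.mp (show ι m' < ι 0 by omega)
      omega
    rw [(hAsrc 0).1, ← hc0, h00]
  have hsrc_true : ∀ m, (w m).1 = true → w m = bQ := by
    intro m hm
    rcases hclass m with h|h|h|h
    · rw [h] at hm; exact absurd hm (by simp [e₁])
    · rw [h] at hm; exact absurd hm (by simp [e₂])
    · rw [h] at hm; exact absurd hm (by simp [bP])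
    · exact h
  have hsync_of_e1 : ∀ m, w m = e₁ →
      ∃ procs : Fin 2 → Fin (n+1), p.sync (ι m) = Sync.rdz () procs ∧ procs 0 = 0 := by
    intro m hw
    cases hs : p.sync (ι m) with
    | bcast =>
      have := hAbc m hs
      rw [hw] at this
      exact absurd this (by simp [e₁])
    | rdz a procs =>
      obtain ⟨j, hj, hlab⟩ := hArdz m a procs hs
      rw [hw] at hlab
      cases a
      have hpr : Sum.inl (α := Unit × Fin 2) (β := Unit) ((), (0:Fin 2))
          = Sum.inl ((), j) := hlab
      simp only [Sum.inl.injEq, Prod.mk.injEq, true_and] at hpr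
      subst hpr
      refine ⟨procs, ?_, hj⟩
      rfl
  -- the Q-set
  set Q : ℕ → Finset (Fin (n+1)) :=
    fun u => Finset.filter (fun j => p.conf u j = true) Finset.univ with hQdef
  have hQmem : ∀ u j, j ∈ Q u ↔ p.conf u j = true := by
    intro u j
    rw [hQdef]
    simp
  have hQmono : ∀ u a procs, p.sync u = Sync.rdz a procs → Q u ⊆ Q (u+1) := by
    intro u a procs hs j hj
    rw [hQmem] at hj
    rw [hQmem]
    have hv := p.valid u
    rw [hs] at hv
    by_cases hpart : ∃ jj, procs jj = j
    · obtain ⟨jj, hjj⟩ := hpart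
      have hR := hv.2.1 jj
      rw [hjj] at hR
      have := (rdz_edge_false hR).1
      rw [this] at hj
      exact absurd hj (by simp)
    · push_neg at hpart
      rw [hv.2.2 j hpart, hj]
  have hQstep : ∀ m, w m = e₁ →
      (Q (ι m)).card < (Q (ι m + 1)).card ∧ (0:Fin (n+1)) ∉ Q (ι m + 1) := by
    intro m hw
    obtain ⟨procs, hs, hp0⟩ := hsync_of_e1 m hw
    have hv := p.valid (ι m)
    rw [hs] at hv
    obtain ⟨hinj, hedges, hframe⟩ := hv
    have hR1 := hedges 1
    obtain ⟨hf1, hd1⟩ := rdz_edge_false hR1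
    have hg1 : p.conf (ι m + 1) (procs 1) = true := by
      rcases hd1 with ⟨h10, _⟩ | ⟨_, h⟩
      · exact absurd h10 (by decide)
      · exact h
    have hR0 := hedges 0
    rw [hp0] at hR0
    obtain ⟨hf0, hd0⟩ := rdz_edge_false hR0
    have hg0 : p.conf (ι m + 1) 0 = false := by
      rcases hd0 with ⟨_, h⟩ | ⟨h01, _⟩
      · exact h
      · exact absurd h01 (by decide)
    have hsub : Q (ι m) ⊆ Q (ι m + 1) := hQmono _ _ _ hs
    have hpin : procs 1 ∈ Q (ι m + 1) := (hQmem _ _).mpr hg1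
    have hpout : procs 1 ∉ Q (ι m) := by
      rw [hQmem, hf1]
      simp
    constructor
    · exact Finset.card_lt_card ⟨hsub, fun h => hpout (h hpin)⟩
    · rw [hQmem, hg0]
      simp
  have hQinterval : ∀ u u', u ≤ u' → (∀ v, u ≤ v → v < u' → p.sync v ≠ Sync.bcast) →
      Q u ⊆ Q u' := by
    intro u u' huu' hnb
    induction u', huu' using Nat.le_induction with
    | base => exact subset_rfl
    | succ u' huu' ih =>
      have h1 := ih (fun v hv1 hv2 => hnb v hv1 (by omega))
      refine h1.trans ?_
      cases hs : p.sync u' with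
      | bcast => exact absurd hs (hnb u' (by omega) (by omega))
      | rdz a procs => exact hQmono _ _ _ hs
  -- counting lemma
  have hcount : ∀ m c, (∀ t, t < c → w (m + t) = e₁) → c ≤ n := by
    intro m c hc
    rcases Nat.eq_zero_or_pos c with hc0 | hcpos
    · omega
    have hnb : ∀ v, ι m ≤ v → v ≤ ι (m + (c-1)) → p.sync v ≠ Sync.bcast := by
      intro v hv1 hv2 hbv
      have hmv : (p.sync v).Moved 0 := by rw [hbv]; trivial
      obtain ⟨m', hm'⟩ := (hmoved v).mp hmv
      have h1 : m ≤ m' := hmono.le_iff_le.mp (by omega)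
      have h2 : m' ≤ m + (c-1) := hmono.le_iff_le.mp (by omega)
      have hw' := hc (m' - m) (by omega)
      rw [show m + (m' - m) = m' by omega] at hw'
      have := hAbc m' (by rw [hm']; exact hbv)
      rw [hw'] at this
      exact absurd this (by simp [e₁])
    have claim : ∀ t, t < c →
        t < (Q (ι (m + t) + 1)).card ∧ (0:Fin (n+1)) ∉ Q (ι (m + t) + 1) := by
      intro t
      induction t with
      | zero =>
        intro ht0
        have hq := hQstep m (hc 0 ht0)
        have hconv : (Q (ι (m + 0) + 1)).card = (Q (ι m + 1)).card := rfl
        exact ⟨by omega, hq.2⟩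
      | succ t ih =>
        intro ht
        have iht := ih (by omega)
        have hsub : Q (ι (m+t) + 1) ⊆ Q (ι (m+t+1)) := by
          apply hQinterval
          · exact hmono (show m+t < m+t+1 by omega)
          · intro v hv1 hv2
            apply hnb v
            · have : ι m ≤ ι (m+t) := hmono.monotone (by omega)
              omega
            · have : ι (m+t+1) ≤ ι (m + (c-1)) := hmono.monotone (by omega)
              omega
        have hst := hQstep (m+t+1) (hc (t+1) ht)
        have hcards : (Q (ι (m+t)+1)).card ≤ (Q (ι (m+t+1))).card :=
          Finset.card_le_card hsub
        have hconv : (Q (ι (m + (t+1)) + 1)).card = (Q (ι (m+t+1) + 1)).card := rfl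
        exact ⟨by omega, hst.2⟩
    obtain ⟨h1, h2⟩ := claim (c-1) (by omega)
    have hQ_le : (Q (ι (m + (c-1)) + 1)).card ≤ n := by
      have hsub : Q (ι (m + (c-1)) + 1) ⊆ Finset.univ.erase 0 :=
        fun j hj => Finset.mem_erase.mpr ⟨fun h0 => h2 (h0 ▸ hj), Finset.mem_univ j⟩
      have := Finset.card_le_card hsub
      rw [Finset.card_erase_of_mem (Finset.mem_univ _), Finset.card_univ, Fintype.card_fin] at this
      omega
    omega
  -- infinitely many broadcast edges in w
  have hbc : ∀ m, ∃ t, w (m + t) ≠ e₁ := by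
    intro m
    by_contra hcon
    push_neg at hcon
    have : n + 1 ≤ n := hcount m (n+1) (fun t _ => hcon t)
    omega
  -- block construction
  set nnF : ℕ → ℕ := fun m => Nat.find (hbc m) with hnnF
  have hfind1 : ∀ m, w (m + nnF m) ≠ e₁ := fun m => Nat.find_spec (hbc m)
  have hfind2 : ∀ m t, t < nnF m → w (m + t) = e₁ := by
    intro m t ht
    have := Nat.find_min (hbc m) ht
    simpa using this
  set mmF : ℕ → ℕ := fun m => if w (m + nnF m) = e₂ then 1 else 0 with hmmF
  -- source propagation
  have hsrcp : ∀ m t, (w m).1 = false → t ≤ nnF m → (w (m + t)).1 = false := by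
    intro m t hm
    induction t with
    | zero => intro _; exact hm
    | succ t ih =>
      intro ht
      have h1 := hfind2 m t (by omega)
      have h2 := hchain (m + t)
      show (w (m + t + 1)).1 = false
      rw [h2, h1]
      rfl
  have hblock : ∀ m, (w m).1 = false →
      (∀ t, t < mmF m → w (m + nnF m + t) = e₂) ∧
      (w (m + nnF m + mmF m) = if mmF m = 1 then bQ else bP) ∧
      (w (m + nnF m + mmF m + 1)).1 = false := by
    intro m hm
    have hsend : (w (m + nnF m)).1 = false := hsrcp m (nnF m) hm le_rfl
    by_cases h2 : w (m + nnF m) = e₂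
    · have hmm1 : mmF m = 1 := by rw [hmmF]; simp [h2]
      have hnext : w (m + nnF m + 1) = bQ := by
        apply hsrc_true
        rw [hchain (m + nnF m), h2]
        rfl
      refine ⟨?_, ?_, ?_⟩
      · intro t ht
        rw [hmm1] at ht
        interval_cases t
        exact h2
      · rw [hmm1, if_pos rfl]
        exact hnext
      · rw [hmm1]
        rw [hchain (m + nnF m + 1), hnext]
        rfl
    · have hmm0 : mmF m = 0 := by rw [hmmF]; simp [h2]
      have hbp : w (m + nnF m) = bP := by
        rcases hclass (m + nnF m) with h|h|h|h
        · exact absurd h (hfind1 m)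
        · exact absurd h h2
        · exact h
        · rw [h] at hsend; exact absurd hsend (by simp [bQ])
      refine ⟨?_, ?_, ?_⟩
      · intro t ht
        rw [hmm0] at ht
        omega
      · rw [hmm0, if_neg (by omega)]
        simpa using hbp
      · rw [hmm0]
        rw [show m + nnF m + 0 + 1 = m + nnF m + 1 by omega, hchain (m + nnF m), hbp]
        rfl
  set Bs : ℕ → ℕ := fun i => Nat.rec 0 (fun _ b => b + nnF b + mmF b + 1) i with hBsdef
  have hBstep : ∀ i, Bs (i+1) = Bs i + nnF (Bs i) + mmF (Bs i) + 1 := fun i => rfl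
  have hinv : ∀ i, (w (Bs i)).1 = false := by
    intro i
    induction i with
    | zero => exact hw0
    | succ i ih =>
      rw [hBstep i]
      exact (hblock (Bs i) ih).2.2
  refine ⟨fun i => nnF (Bs i), fun i => mmF (Bs i), Bs, rfl, ?_, hBstep, ?_, ?_, ?_, ?_⟩
  · intro i
    have hmi : mmF (Bs i) = if w (Bs i + nnF (Bs i)) = e₂ then 1 else 0 := rfl
    show mmF (Bs i) ≤ 1
    rw [hmi]
    split <;> omega
  · intro i t ht
    exact hfind2 (Bs i) t ht
  · intro i t ht
    exact (hblock (Bs i) (hinv i)).1 t ht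
  · intro i
    exact (hblock (Bs i) (hinv i)).2.1
  · refine ⟨n, Filter.Eventually.of_forall ?_⟩
    intro i
    exact hcount (Bs i) (nnF (Bs i)) (fun t ht => hfind2 (Bs i) t ht)
/-- `exec_inf(P⋆)` is exactly the set of infinite edge sequences of
the form `e₁^{n_1} e₂^{m_1} β_1 e₁^{n_2} e₂^{m_2} β_2 ⋯` where each `m_i ∈ {0,1}`,
`β_i = b_q` if `m_i = 1` and `β_i = b_p` otherwise, and `limsup n_i < ∞`
(equivalently: the `n_i` are eventually bounded by some `N`).  The `i`-th block
starts at position `B i`. -/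
theorem execInf_pstar_characterization :
    execInf Pstar =
      {w | ∃ nn mm B : ℕ → ℕ,
        B 0 = 0 ∧
        (∀ i, mm i ≤ 1) ∧
        (∀ i, B (i + 1) = B i + nn i + mm i + 1) ∧
        (∀ i t, t < nn i → w (B i + t) = e₁) ∧
        (∀ i t, t < mm i → w (B i + nn i + t) = e₂) ∧
        (∀ i, w (B i + nn i + mm i) = if mm i = 1 then bQ else bP) ∧
        (∃ N, ∀ᶠ i in Filter.atTop, nn i ≤ N)} := by
  ext w
  simp only [Set.mem_setOf_eq]
  constructor
  · rintro ⟨n, p, hrun, ι, hmono, hmoved, hedge⟩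
    exact forward_dir p hrun w ι hmono hmoved hedge
  · rintro ⟨nn, mm, B, hB0, hmm, hBs, he1, he2, hbr, N, hN⟩
    rw [Filter.eventually_atTop] at hN
    obtain ⟨i0, hi0⟩ := hN
    have hMi : ∀ i, nn i ≤ N + (Finset.range i0).sup nn := by
      intro i
      rcases le_or_gt i0 i with h | h
      · have := hi0 i h; omega
      · have := Finset.le_sup (f := nn) (Finset.mem_range.mpr h)
        omega
    exact blocks_mem w nn mm B _ hB0 hmm hBs he1 he2 hbr hMi
end

section
/- Let P⋆ be the RB-template with k = 2, states {p,q}, initial states {p}, one rendezvous action a, rendezvous edges (p,a_1,p) and (p,a_2,q), and broadcast edges (p,𝔟,p) and (q,𝔟,p). Then for every n ∈ ℕ, in every infinite run of the system P⋆^n there are at most n−1 consecutive rendezvous transitions: every contiguous segment of the run consisting solely of rendezvous transitions has length at most n−1, and hence between any two broadcast transitions (and before the first broadcast transition) at most n−1 rendezvous transitions occur. -/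
/-- In every infinite run of `P⋆^n`, every contiguous segment
consisting solely of rendezvous transitions has length at most `n - 1`. -/
theorem pstar_bounded_consecutive_rendezvous
    (n : ℕ) (p : InfPath Pstar (Fin n)) (hrun : p.IsRun) :
    ∀ i L : ℕ, (∀ t, i ≤ t → t < i + L → p.sync t ≠ Sync.bcast) → L ≤ n - 1 := by
  classical
  intro i L hL
  set cnt : ℕ → ℕ := fun t =>
    (Finset.univ.filter (fun j : Fin n => p.conf t j = true)).card with hcnt
  have key : ∀ t, p.sync t ≠ Sync.bcast → cnt (t+1) = cnt t + 1 ∧ cnt t + 2 ≤ n := by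
    intro t ht
    cases hσ : p.sync t with
    | bcast => exact absurd hσ ht
    | rdz a procs =>
      have hv := p.valid t
      rw [hσ] at hv
      obtain ⟨hinj, hedges, hfix⟩ := hv
      have h0 := hedges 0
      have h1 := hedges 1
      simp only [Pstar, Set.mem_insert_iff, Set.mem_singleton_iff, Prod.mk.injEq] at h0 h1
      have hf0 : p.conf t (procs 0) = false ∧ p.conf (t+1) (procs 0) = false := by
        rcases h0 with h | h | h | h <;> simp_all
      have hf1 : p.conf t (procs 1) = false ∧ p.conf (t+1) (procs 1) = true := by
        rcases h1 with h | h | h | h <;> simp_all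
      have hne : procs 0 ≠ procs 1 := fun h => absurd (hinj h) (by decide)
      have hother : ∀ j : Fin n, j ≠ procs 0 → j ≠ procs 1 →
          p.conf (t+1) j = p.conf t j := by
        intro j hj0 hj1
        apply hfix
        intro k
        fin_cases k
        · exact fun h => hj0 h.symm
        · exact fun h => hj1 h.symm
      have hset : (Finset.univ.filter (fun j : Fin n => p.conf (t+1) j = true)) =
          insert (procs 1) (Finset.univ.filter (fun j : Fin n => p.conf t j = true)) := by
        ext j
        simp only [Finset.mem_filter, Finset.mem_univ, true_and, Finset.mem_insert]
        by_cases hj1 : j = procs 1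
        · subst hj1; simp [hf1.2]
        · by_cases hj0 : j = procs 0
          · subst hj0; simp [hf0.1, hf0.2, hne, Ne.symm hj1]
          · rw [hother j hj0 hj1]; simp [hj1]
      have hnotin1 : procs 1 ∉ (Finset.univ.filter (fun j : Fin n => p.conf t j = true)) := by
        simp [hf1.1]
      have hnotin0 : procs 0 ∉ (Finset.univ.filter (fun j : Fin n => p.conf t j = true)) := by
        simp [hf0.1]
      constructor
      · simp only [hcnt, hset, Finset.card_insert_of_notMem hnotin1]
      · have : insert (procs 0) (insert (procs 1)
            (Finset.univ.filter (fun j : Fin n => p.conf t j = true))) ⊆ Finset.univ :=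
          Finset.subset_univ _
        have hcard := Finset.card_le_card this
        rw [Finset.card_insert_of_notMem (by simp [hnotin0, hne]),
          Finset.card_insert_of_notMem hnotin1, Finset.card_univ, Fintype.card_fin] at hcard
        simp only [hcnt]
        omega
  have grow : ∀ m, m ≤ L → m ≤ cnt (i + m) := by
    intro m
    induction m with
    | zero => intro _; exact Nat.zero_le _
    | succ m ih =>
      intro hm
      have h1 := ih (Nat.le_of_succ_le hm)
      have h2 := key (i + m) (hL (i + m) (Nat.le_add_right _ _) (by omega))
      have : i + (m + 1) = (i + m) + 1 := by omega
      rw [this]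
      omega
  rcases Nat.eq_zero_or_pos L with h | h
  · omega
  · have h1 := grow (L - 1) (by omega)
    have h2 := key (i + (L - 1)) (hL (i + (L - 1)) (Nat.le_add_right _ _) (by omega))
    omega
end

section
/- For every discrete timed network template T = (Q, I, R_T) with clock set C, per-letter reset commands r(a_i) ⊆ C and guards p(a_i), there exists an RB-template P (with the same rendezvous alphabet Σ_rdz and a broadcast letter 𝔟 modeling the advance of time by one unit) such that exec(P) = exec(T): the projections onto a single process of the runs of the RB-systems P^n, over all n ∈ ℕ, coincide (under the correspondence that identifies a 𝔟-edge of P with a time step of T, and a rendezvous edge of P with the corresponding guarded rendezvous edge of T) with the projections onto a single process of the runs of the timed networks T^n, over all n ∈ ℕ. Moreover, P can be taken finite: clock values larger than the greatest constant c_max appearing in the guards are collapsed to a single abstract value, so P has at most |Q|·(c_max+2)^{|C|} states. -/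
/-! ### Discrete timed networks -/

/-- Clock guards: Boolean combinations of predicates `c < x` and `c = x`
(`c ∈ ℕ` a constant, `x` a clock). -/
inductive Guard (C : Type) where
  | lt (c : ℕ) (x : C) : Guard C
  | eq (c : ℕ) (x : C) : Guard C
  | not (g : Guard C) : Guard C
  | and (g₁ g₂ : Guard C) : Guard C
  | or (g₁ g₂ : Guard C) : Guard C

/-- Satisfaction of a guard by a clock valuation. -/
def Guard.sat {C : Type} : Guard C → (C → ℕ) → Prop
  | .lt c x, v => c < v x
  | .eq c x, v => c = v x
  | .not g, v => ¬ g.sat v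
  | .and g₁ g₂, v => g₁.sat v ∧ g₂.sat v
  | .or g₁ g₂, v => g₁.sat v ∨ g₂.sat v

/-- The greatest constant appearing in a guard. -/
def Guard.maxC {C : Type} : Guard C → ℕ
  | .lt c _ => c
  | .eq c _ => c
  | .not g => g.maxC
  | .and g₁ g₂ => max g₁.maxC g₂.maxC
  | .or g₁ g₂ => max g₁.maxC g₂.maxC

/-- A discrete timed network template: control states `Q`, initial states, edges
labeled by rendezvous letters, and, for each letter, a reset command and a guard. -/
structure TNTemplate (k : ℕ) (A Q C : Type) where
  I : Set Q
  R : Set (Q × (A × Fin k) × Q)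
  reset : A × Fin k → Set C
  guard : A × Fin k → Guard C

/-- Synchronization label of a step of a timed network with `n` processes:
either a time step (all clocks advance by one) or a `k`-wise rendezvous. -/
inductive TSync (k : ℕ) (A : Type) (n : ℕ) where
  | time : TSync k A n
  | rdz (a : A) (procs : Fin k → Fin n) : TSync k A n

/-- Global steps of the timed network `T^n`.  Local states are pairs
(control state, clock valuation). -/
def TNTrans {k : ℕ} {A Q C : Type} (T : TNTemplate k A Q C) {n : ℕ}
    (f : Fin n → Q × (C → ℕ)) (σ : TSync k A n) (g : Fin n → Q × (C → ℕ)) : Prop :=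
  match σ with
  | .time => ∀ i, (g i).1 = (f i).1 ∧ ∀ x, (g i).2 x = (f i).2 x + 1
  | .rdz a procs =>
      Function.Injective procs ∧
      (∀ j : Fin k, ((f (procs j)).1, (a, j), (g (procs j)).1) ∈ T.R ∧
        (T.guard (a, j)).sat (f (procs j)).2 ∧
        (∀ x ∈ T.reset (a, j), (g (procs j)).2 x = 0) ∧
        (∀ x ∉ T.reset (a, j), (g (procs j)).2 x = (f (procs j)).2 x)) ∧
      (∀ i, (∀ j, procs j ≠ i) → g i = f i)

/-- Process `i` moves in a step with label `σ` (in every time step, and in a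
rendezvous only if it participates). -/
def TSync.Moved {k : ℕ} {A : Type} {n : ℕ} (σ : TSync k A n) (i : Fin n) : Prop :=
  match σ with
  | .time => True
  | .rdz _ procs => ∃ j, procs j = i

/-- The letter contributed to the projection of process `i` by the step `(f, σ, g)`:
`some none` for a time step, `some (some (q, a_j, q'))` if `i` takes the edge
`(q, a_j, q')` in a rendezvous, `none` if `i` does not move. -/
noncomputable def tEdgeAt {k : ℕ} {A Q C : Type} {n : ℕ}
    (f g : Fin n → Q × (C → ℕ)) (σ : TSync k A n) (i : Fin n) :
    Option (Option (Q × (A × Fin k) × Q)) :=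
  match σ with
  | .time => some none
  | .rdz a procs =>
      letI := Classical.propDecidable (∃ j, procs j = i)
      if h : ∃ j, procs j = i then
        some (some ((f i).1, (a, Classical.choose h), (g i).1))
      else none

/-- A finite path of the timed network `T^n`. -/
structure TNFinPath {k : ℕ} {A Q C : Type} (T : TNTemplate k A Q C) (n : ℕ) where
  len : ℕ
  conf : ℕ → Fin n → Q × (C → ℕ)
  sync : ℕ → TSync k A n
  valid : ∀ t, t < len → TNTrans T (conf t) (sync t) (conf (t + 1))

/-- An infinite path of the timed network `T^n`. -/
structure TNInfPath {k : ℕ} {A Q C : Type} (T : TNTemplate k A Q C) (n : ℕ) where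
  conf : ℕ → Fin n → Q × (C → ℕ)
  sync : ℕ → TSync k A n
  valid : ∀ t, TNTrans T (conf t) (sync t) (conf (t + 1))

/-- A run starts with every process in an initial control state with all clocks `0`. -/
def TNFinPath.IsRun {k : ℕ} {A Q C : Type} {T : TNTemplate k A Q C} {n : ℕ}
    (p : TNFinPath T n) : Prop :=
  ∀ i, (p.conf 0 i).1 ∈ T.I ∧ ∀ x, (p.conf 0 i).2 x = 0

def TNInfPath.IsRun {k : ℕ} {A Q C : Type} {T : TNTemplate k A Q C} {n : ℕ}
    (p : TNInfPath T n) : Prop :=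
  ∀ i, (p.conf 0 i).1 ∈ T.I ∧ ∀ x, (p.conf 0 i).2 x = 0

/-- The projection of a finite path of `T^n` onto process `i`. -/
noncomputable def TNFinPath.proj {k : ℕ} {A Q C : Type} {T : TNTemplate k A Q C} {n : ℕ}
    (p : TNFinPath T n) (i : Fin n) : List (Option (Q × (A × Fin k) × Q)) :=
  (List.range p.len).filterMap (fun t => tEdgeAt (p.conf t) (p.conf (t + 1)) (p.sync t) i)

/-- The finite executions of the timed network induced by `T`. -/
def execFinTN {k : ℕ} {A Q C : Type} (T : TNTemplate k A Q C) :
    Set (List (Option (Q × (A × Fin k) × Q))) :=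
  {w | ∃ n : ℕ, ∃ p : TNFinPath T (n + 1), p.IsRun ∧ p.proj 0 = w}

/-- The infinite executions of the timed network induced by `T`. -/
def execInfTN {k : ℕ} {A Q C : Type} (T : TNTemplate k A Q C) :
    Set (ℕ → Option (Q × (A × Fin k) × Q)) :=
  {w | ∃ n : ℕ, ∃ p : TNInfPath T (n + 1), p.IsRun ∧
    ∃ ι : ℕ → ℕ, StrictMono ι ∧
      (∀ t, (p.sync t).Moved 0 ↔ ∃ m, ι m = t) ∧
      (∀ m, tEdgeAt (p.conf (ι m)) (p.conf (ι m + 1)) (p.sync (ι m)) 0 = some (w m))}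

/-- The correspondence between edges of the RB-template `P` (whose states project to
control states of `T` via `h`) and steps of `T`: a broadcast edge corresponds to a
time step (`none`), a rendezvous edge to the corresponding edge of `T`. -/
def edgeToTLet {k : ℕ} {A SP Q : Type} (h : SP → Q) (e : EdgeT k A SP) :
    Option (Q × (A × Fin k) × Q) :=
  match e.2.1 with
  | Sum.inr _ => none
  | Sum.inl ς => some (h e.1, ς, h e.2.2)


/-! ### Auxiliary development -/

namespace TimedRB

variable {k : ℕ} {A Q C : Type}

/-- Cap a natural at `N+1`, landing in `Fin (N+2)`. -/
def capF (N m : ℕ) : Fin (N + 2) := ⟨min m (N + 1), by omega⟩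

lemma capF_zero (N : ℕ) : capF N 0 = 0 := by
  apply Fin.ext; simp [capF]

lemma capF_succ (N m : ℕ) : capF N (m + 1) = capF N ((capF N m : ℕ) + 1) := by
  apply Fin.ext; simp [capF]

lemma guard_cap {N : ℕ} (g : Guard C) (hg : g.maxC ≤ N) (v : C → ℕ) :
    Guard.sat g (fun x => ((capF N (v x) : Fin (N + 2)) : ℕ)) ↔ g.sat v := by
  induction g with
  | lt c x =>
      have hc : c ≤ N := hg
      show c < min (v x) (N + 1) ↔ c < v x
      omega
  | eq c x =>
      have hc : c ≤ N := hg
      show c = min (v x) (N + 1) ↔ c = v x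
      omega
  | not g ih =>
      show ¬ _ ↔ ¬ _
      rw [ih hg]
  | and g₁ g₂ ih₁ ih₂ =>
      have hg' : g₁.maxC ≤ N ∧ g₂.maxC ≤ N := by
        have : max g₁.maxC g₂.maxC ≤ N := hg
        omega
      show _ ∧ _ ↔ _ ∧ _
      rw [ih₁ hg'.1, ih₂ hg'.2]
  | or g₁ g₂ ih₁ ih₂ =>
      have hg' : g₁.maxC ≤ N ∧ g₂.maxC ≤ N := by
        have : max g₁.maxC g₂.maxC ≤ N := hg
        omega
      show _ ∨ _ ↔ _ ∨ _
      rw [ih₁ hg'.1, ih₂ hg'.2]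

variable [Fintype A]

/-- The greatest guard constant of `T`. -/
def NT (T : TNTemplate k A Q C) : ℕ :=
  Finset.univ.sup (fun ς : A × Fin k => (T.guard ς).maxC)

lemma maxC_le (T : TNTemplate k A Q C) (ς : A × Fin k) : (T.guard ς).maxC ≤ NT T := by
  unfold NT
  exact Finset.le_sup (f := fun ς : A × Fin k => (T.guard ς).maxC) (Finset.mem_univ ς)

/-- State space of the region abstraction. -/
abbrev SPT (T : TNTemplate k A Q C) : Type _ := Q × (C → Fin (NT T + 2))

/-- The RB-template obtained from a timed-network template by capping clock values. -/
def PofT (T : TNTemplate k A Q C) : RBTemplate k A (SPT T) where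
  I := {s | s.1 ∈ T.I ∧ s.2 = fun _ => 0}
  R := {e | match e.2.1 with
    | Sum.inr _ => e.2.2.1 = e.1.1 ∧ e.2.2.2 = fun x => capF (NT T) ((e.1.2 x : ℕ) + 1)
    | Sum.inl ς => (e.1.1, ς, e.2.2.1) ∈ T.R ∧
        (T.guard ς).sat (fun x => (e.1.2 x : ℕ)) ∧
        (∀ x ∈ T.reset ς, e.2.2.2 x = 0) ∧ (∀ x ∉ T.reset ς, e.2.2.2 x = e.1.2 x)}

/-- Translating sync labels from timed networks to RB systems. -/
def syncOf {n : ℕ} : TSync k A n → Sync k A (Fin n)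
  | .time => .bcast
  | .rdz a procs => .rdz a procs

/-- Translating sync labels from RB systems to timed networks. -/
def tsyncOf {n : ℕ} : Sync k A (Fin n) → TSync k A n
  | .bcast => .time
  | .rdz a procs => .rdz a procs

lemma syncOf_tsyncOf {n : ℕ} (σ : Sync k A (Fin n)) : syncOf (tsyncOf σ) = σ := by
  cases σ <;> rfl

lemma moved_syncOf {n : ℕ} (σ : TSync k A n) (i : Fin n) :
    (syncOf σ).Moved i ↔ σ.Moved i := by
  cases σ <;> exact Iff.rfl

lemma moved_tsyncOf {n : ℕ} (σ : Sync k A (Fin n)) (i : Fin n) :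
    (tsyncOf σ).Moved i ↔ σ.Moved i := by
  cases σ <;> exact Iff.rfl

/-- Capping a configuration of the timed network. -/
def capConf (N : ℕ) {n : ℕ} (f : Fin n → Q × (C → ℕ)) : Fin n → Q × (C → Fin (N + 2)) :=
  fun i => ((f i).1, fun x => capF N ((f i).2 x))

/-- `f'` is the capped version of `f`. -/
def RelC (N : ℕ) {n : ℕ} (f : Fin n → Q × (C → ℕ)) (f' : Fin n → Q × (C → Fin (N + 2))) :
    Prop :=
  ∀ i, f' i = ((f i).1, fun x => capF N ((f i).2 x))

lemma transA (T : TNTemplate k A Q C) {n : ℕ} {f g : Fin n → Q × (C → ℕ)}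
    {σ : TSync k A n} (h : TNTrans T f σ g) :
    RBTrans (PofT T) (capConf (NT T) f) (syncOf σ) (capConf (NT T) g) := by
  cases σ with
  | time =>
      intro i
      obtain ⟨h1, h2⟩ := h i
      refine ⟨h1, ?_⟩
      funext x
      show capF (NT T) ((g i).2 x) = capF (NT T) (min ((f i).2 x) (NT T + 1) + 1)
      rw [h2 x]
      exact capF_succ (NT T) ((f i).2 x)
  | rdz a procs =>
      obtain ⟨hinj, hedge, hfix⟩ := h
      refine ⟨hinj, fun j => ?_, fun i hi => ?_⟩
      · obtain ⟨hR, hsat, h0, hkeep⟩ := hedge j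
        refine ⟨hR, ?_, ?_, ?_⟩
        · exact (guard_cap _ (maxC_le T _) _).mpr hsat
        · intro x hx
          show capF (NT T) ((g (procs j)).2 x) = 0
          rw [h0 x hx, capF_zero]
        · intro x hx
          show capF (NT T) ((g (procs j)).2 x) = capF (NT T) ((f (procs j)).2 x)
          rw [hkeep x hx]
      · show capConf (NT T) g i = capConf (NT T) f i
        simp [capConf, hfix i hi]

open Classical in
/-- One step of the timed network reconstructed from an RB step. -/
noncomputable def stepT (T : TNTemplate k A Q C) {n : ℕ}
    (f : Fin n → Q × (C → ℕ)) (g' : Fin n → SPT T) :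
    Sync k A (Fin n) → Fin n → Q × (C → ℕ)
  | .bcast => fun i => ((g' i).1, fun x => (f i).2 x + 1)
  | .rdz a procs => fun i =>
      if h : ∃ j, procs j = i then
        ((g' i).1, fun x => if x ∈ T.reset (a, Classical.choose h) then 0 else (f i).2 x)
      else f i

lemma transB (T : TNTemplate k A Q C) {n : ℕ} {f : Fin n → Q × (C → ℕ)}
    {f' g' : Fin n → SPT T} {σ' : Sync k A (Fin n)}
    (hrel : RelC (NT T) f f') (h : RBTrans (PofT T) f' σ' g') :
    TNTrans T f (tsyncOf σ') (stepT T f g' σ') ∧ RelC (NT T) (stepT T f g' σ') g' := by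
  classical
  cases σ' with
  | bcast =>
      constructor
      · intro i
        obtain ⟨h1, h2⟩ := h i
        refine ⟨?_, fun x => rfl⟩
        show (g' i).1 = (f i).1
        rw [h1, hrel i]
      · intro i
        obtain ⟨h1, h2⟩ := h i
        have hf2 : (f' i).2 = fun x => capF (NT T) ((f i).2 x) := by rw [hrel i]
        refine Prod.ext ?_ ?_
        · rfl
        · show (g' i).2 = _
          rw [h2, hf2]
          funext x
          show capF (NT T) (min ((f i).2 x) (NT T + 1) + 1) = capF (NT T) ((f i).2 x + 1)
          exact (capF_succ (NT T) ((f i).2 x)).symm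
  | rdz a procs =>
      obtain ⟨hinj, hedge, hfix⟩ := h
      have key : ∀ j : Fin k,
          ((f (procs j)).1, (a, j), (stepT T f g' (.rdz a procs) (procs j)).1) ∈ T.R ∧
          (T.guard (a, j)).sat (f (procs j)).2 ∧
          (∀ x ∈ T.reset (a, j), (stepT T f g' (.rdz a procs) (procs j)).2 x = 0) ∧
          (∀ x ∉ T.reset (a, j),
            (stepT T f g' (.rdz a procs) (procs j)).2 x = (f (procs j)).2 x) := by
        intro j
        have hex : ∃ j', procs j' = procs j := ⟨j, rfl⟩
        have hch : Classical.choose hex = j := hinj (Classical.choose_spec hex)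
        obtain ⟨hR, hsat, h0, hkeep⟩ := hedge j
        have hstep : stepT T f g' (.rdz a procs) (procs j) =
            ((g' (procs j)).1,
              fun x => if x ∈ T.reset (a, j) then 0 else (f (procs j)).2 x) := by
          show dite _ _ _ = _
          rw [dif_pos hex, hch]
        have hf1 : (f' (procs j)).1 = (f (procs j)).1 := by rw [hrel (procs j)]
        have hf2 : (f' (procs j)).2 = fun x => capF (NT T) ((f (procs j)).2 x) := by
          rw [hrel (procs j)]
        refine ⟨?_, ?_, ?_, ?_⟩
        · rw [hstep]
          rw [hf1] at hR
          exact hR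
        · rw [hf2] at hsat
          exact (guard_cap _ (maxC_le T _) _).mp hsat
        · intro x hx
          rw [hstep]
          simp [hx]
        · intro x hx
          rw [hstep]
          simp [hx]
      constructor
      · refine ⟨hinj, key, fun i hi => ?_⟩
        have hex : ¬ ∃ j, procs j = i := by
          rintro ⟨j, hj⟩; exact hi j hj
        show dite _ _ _ = _
        rw [dif_neg hex]
      · intro i
        by_cases hex : ∃ j, procs j = i
        · obtain ⟨j, hj⟩ := hex
          subst hj
          obtain ⟨hR, hsat, h0, hkeep⟩ := hedge j
          obtain ⟨_, _, hs0, hskeep⟩ := key j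
          refine Prod.ext ?_ ?_
          · show (g' (procs j)).1 = (stepT T f g' (.rdz a procs) (procs j)).1
            show (g' (procs j)).1 = (dite _ _ _ : Q × (C → ℕ)).1
            rw [dif_pos ⟨j, rfl⟩]
          · show (g' (procs j)).2 =
              fun x => capF (NT T) ((stepT T f g' (.rdz a procs) (procs j)).2 x)
            funext x
            by_cases hx : x ∈ T.reset (a, j)
            · rw [h0 x hx, hs0 x hx, capF_zero]
            · rw [hkeep x hx, hskeep x hx]
              show (f' (procs j)).2 x = capF (NT T) ((f (procs j)).2 x)
              simp only [hrel (procs j)]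
        · have hfixi : g' i = f' i := hfix i (fun j hj => hex ⟨j, hj⟩)
          have hstep : stepT T f g' (.rdz a procs) i = f i := by
            show dite _ _ _ = _
            rw [dif_neg hex]
          rw [hfixi, hstep]
          exact hrel i

/-- Reconstructing a timed-network path from an RB-path. -/
noncomputable def liftConf (T : TNTemplate k A Q C) {n : ℕ}
    (pc : ℕ → Fin n → SPT T) (ps : ℕ → Sync k A (Fin n)) : ℕ → Fin n → Q × (C → ℕ)
  | 0 => fun i => ((pc 0 i).1, fun _ => 0)
  | t + 1 => stepT T (liftConf T pc ps t) (pc (t + 1)) (ps t)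

lemma lift_rel (T : TNTemplate k A Q C) {n : ℕ} (pc : ℕ → Fin n → SPT T)
    (ps : ℕ → Sync k A (Fin n)) (h0 : ∀ i, pc 0 i ∈ (PofT T).I) :
    ∀ t : ℕ, (∀ s, s < t → RBTrans (PofT T) (pc s) (ps s) (pc (s + 1))) →
      RelC (NT T) (liftConf T pc ps t) (pc t) := by
  intro t
  induction t with
  | zero =>
      intro _ i
      obtain ⟨h1, h2⟩ := h0 i
      refine Prod.ext rfl ?_
      show (pc 0 i).2 = _
      rw [h2]
      funext x
      exact (capF_zero (NT T)).symm
  | succ t ih =>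
      intro hv
      exact (transB T (ih (fun s hs => hv s (by omega))) (hv t (by omega))).2

lemma lift_valid (T : TNTemplate k A Q C) {n : ℕ} (pc : ℕ → Fin n → SPT T)
    (ps : ℕ → Sync k A (Fin n)) (h0 : ∀ i, pc 0 i ∈ (PofT T).I) (t : ℕ)
    (hv : ∀ s, s ≤ t → RBTrans (PofT T) (pc s) (ps s) (pc (s + 1))) :
    TNTrans T (liftConf T pc ps t) (tsyncOf (ps t)) (liftConf T pc ps (t + 1)) :=
  (transB T (lift_rel T pc ps h0 t (fun s hs => hv s (by omega))) (hv t le_rfl)).1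

lemma edge_corr {V : Type} {n : ℕ} (f g : Fin n → Q × (C → ℕ)) (f' g' : Fin n → Q × V)
    (h1 : ∀ i, (f' i).1 = (f i).1) (h2 : ∀ i, (g' i).1 = (g i).1) (σ : TSync k A n)
    (i : Fin n) :
    Option.map (edgeToTLet Prod.fst) (edgeAt f' g' (syncOf σ) i) = tEdgeAt f g σ i := by
  cases σ with
  | time =>
      rfl
  | rdz a procs =>
      simp only [syncOf, edgeAt, tEdgeAt]
      by_cases h : ∃ j, procs j = i
      · rw [dif_pos h, dif_pos h]
        show some (some ((f' i).1, (a, Classical.choose h), (g' i).1)) = _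
        rw [h1 i, h2 i]
      · rw [dif_neg h, dif_neg h]
        rfl

end TimedRB

/-- For every discrete timed network template `T` there is a
finite RB-template `P` (with the same rendezvous alphabet, the broadcast modeling
the advance of time by one unit) with `exec(P) = exec(T)` under the correspondence
identifying broadcast edges with time steps and rendezvous edges of `P` with the
corresponding guarded edges of `T`; moreover `P` has at most
`|Q| · (c_max + 2)^|C|` states, where `c_max` is the greatest constant in the guards. -/
theorem timed_network_to_RB
    {k : ℕ} {A Q C : Type} [Fintype A] [Fintype Q] [Fintype C] (hk : 2 ≤ k)
    (T : TNTemplate k A Q C) :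
    ∃ (SP : Type) (P : RBTemplate k A SP) (h : SP → Q),
      Finite SP ∧
      Nat.card SP ≤ Fintype.card Q *
        (Finset.univ.sup (fun ς : A × Fin k => (T.guard ς).maxC) + 2) ^ Fintype.card C ∧
      P.BTotal ∧
      (∀ w : List (Option (Q × (A × Fin k) × Q)),
        (∃ l ∈ execFin P, w = l.map (edgeToTLet h)) ↔ w ∈ execFinTN T) ∧
      (∀ w : ℕ → Option (Q × (A × Fin k) × Q),
        (∃ v ∈ execInf P, w = fun t => edgeToTLet h (v t)) ↔ w ∈ execInfTN T) := by
  classical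
  refine ⟨TimedRB.SPT T, TimedRB.PofT T, Prod.fst, ?_, ?_, ?_, ?_, ?_⟩
  · infer_instance
  · have hcard : Nat.card (TimedRB.SPT T) =
        Fintype.card Q * (TimedRB.NT T + 2) ^ Fintype.card C := by
      simp [Nat.card_eq_fintype_card, Fintype.card_fun]
    unfold TimedRB.NT at hcard
    exact le_of_eq hcard
  · intro s
    exact ⟨(s.1, fun x => TimedRB.capF (TimedRB.NT T) ((s.2 x : ℕ) + 1)), rfl, rfl⟩
  · -- finite executions
    intro w
    constructor
    · rintro ⟨l, ⟨n, p, hrun, hproj⟩, rfl⟩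
      have hrel : ∀ t ≤ p.len,
          TimedRB.RelC (TimedRB.NT T) (TimedRB.liftConf T p.conf p.sync t) (p.conf t) :=
        fun t ht => TimedRB.lift_rel T p.conf p.sync hrun t
          (fun s hs => p.valid s (by omega))
      refine ⟨n, ⟨p.len, TimedRB.liftConf T p.conf p.sync,
          fun t => TimedRB.tsyncOf (p.sync t), fun t ht =>
            TimedRB.lift_valid T p.conf p.sync hrun t
              (fun s hs => p.valid s (by omega))⟩, fun i => ⟨(hrun i).1, fun x => rfl⟩, ?_⟩
      rw [← hproj]
      show (List.range p.len).filterMap _ = List.map _ ((List.range p.len).filterMap _)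
      rw [List.map_filterMap]
      refine List.filterMap_congr fun t ht => ?_
      rw [List.mem_range] at ht
      have h1 : ∀ i, (p.conf t i).1 = (TimedRB.liftConf T p.conf p.sync t i).1 :=
        fun i => by rw [hrel t (by omega) i]
      have h2 : ∀ i, (p.conf (t + 1) i).1 =
          (TimedRB.liftConf T p.conf p.sync (t + 1) i).1 :=
        fun i => by rw [hrel (t + 1) (by omega) i]
      have := TimedRB.edge_corr (TimedRB.liftConf T p.conf p.sync t)
        (TimedRB.liftConf T p.conf p.sync (t + 1)) (p.conf t) (p.conf (t + 1))
        h1 h2 (TimedRB.tsyncOf (p.sync t)) 0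
      rw [TimedRB.syncOf_tsyncOf] at this
      exact this.symm
    · rintro ⟨n, p, hrun, hproj⟩
      set q : FinPath (TimedRB.PofT T) (Fin (n + 1)) :=
        ⟨p.len, fun t => TimedRB.capConf (TimedRB.NT T) (p.conf t),
          fun t => TimedRB.syncOf (p.sync t),
          fun t ht => TimedRB.transA T (p.valid t ht)⟩ with hq
      refine ⟨q.proj 0, ⟨n, q, ?_, rfl⟩, ?_⟩
      · intro i
        refine ⟨(hrun i).1, ?_⟩
        show (fun x => TimedRB.capF (TimedRB.NT T) ((p.conf 0 i).2 x)) = _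
        funext x
        rw [(hrun i).2 x, TimedRB.capF_zero]
      · rw [← hproj]
        show _ = List.map _ ((List.range p.len).filterMap _)
        rw [List.map_filterMap]
        refine List.filterMap_congr fun t ht => ?_
        exact (TimedRB.edge_corr (p.conf t) (p.conf (t + 1))
          (TimedRB.capConf (TimedRB.NT T) (p.conf t))
          (TimedRB.capConf (TimedRB.NT T) (p.conf (t + 1)))
          (fun i => rfl) (fun i => rfl) (p.sync t) 0).symm
  · -- infinite executions
    intro w
    constructor
    · rintro ⟨v, ⟨n, p, hrun, ι, hmono, hmoved, hedge⟩, rfl⟩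
      have hrel : ∀ t,
          TimedRB.RelC (TimedRB.NT T) (TimedRB.liftConf T p.conf p.sync t) (p.conf t) :=
        fun t => TimedRB.lift_rel T p.conf p.sync hrun t (fun s _ => p.valid s)
      refine ⟨n, ⟨TimedRB.liftConf T p.conf p.sync,
          fun t => TimedRB.tsyncOf (p.sync t), fun t =>
            TimedRB.lift_valid T p.conf p.sync hrun t (fun s _ => p.valid s)⟩,
        fun i => ⟨(hrun i).1, fun x => rfl⟩, ι, hmono, ?_, ?_⟩
      · intro t
        rw [TimedRB.moved_tsyncOf]
        exact hmoved t
      · intro m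
        have h1 : ∀ i, (p.conf (ι m) i).1 =
            (TimedRB.liftConf T p.conf p.sync (ι m) i).1 := fun i => by rw [hrel (ι m) i]
        have h2 : ∀ i, (p.conf (ι m + 1) i).1 =
            (TimedRB.liftConf T p.conf p.sync (ι m + 1) i).1 :=
          fun i => by rw [hrel (ι m + 1) i]
        have hc := TimedRB.edge_corr (TimedRB.liftConf T p.conf p.sync (ι m))
          (TimedRB.liftConf T p.conf p.sync (ι m + 1)) (p.conf (ι m)) (p.conf (ι m + 1))
          h1 h2 (TimedRB.tsyncOf (p.sync (ι m))) 0
        rw [TimedRB.syncOf_tsyncOf, hedge m] at hc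
        exact hc.symm
    · rintro ⟨n, p, hrun, ι, hmono, hmoved, hedge⟩
      set q : InfPath (TimedRB.PofT T) (Fin (n + 1)) :=
        ⟨fun t => TimedRB.capConf (TimedRB.NT T) (p.conf t),
          fun t => TimedRB.syncOf (p.sync t),
          fun t => TimedRB.transA T (p.valid t)⟩ with hq
      have hm : ∀ m, ∃ e, edgeAt (q.conf (ι m)) (q.conf (ι m + 1)) (q.sync (ι m)) 0 =
          some e ∧ edgeToTLet Prod.fst e = w m := by
        intro m
        refine Option.map_eq_some_iff.mp ?_
        have hc := TimedRB.edge_corr (p.conf (ι m)) (p.conf (ι m + 1))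
          (TimedRB.capConf (TimedRB.NT T) (p.conf (ι m)))
          (TimedRB.capConf (TimedRB.NT T) (p.conf (ι m + 1)))
          (fun i => rfl) (fun i => rfl) (p.sync (ι m)) 0
        rw [hc]
        exact hedge m
      choose v hv1 hv2 using hm
      refine ⟨v, ⟨n, q, ?_, ι, hmono, ?_, hv1⟩, ?_⟩
      · intro i
        refine ⟨(hrun i).1, ?_⟩
        show (fun x => TimedRB.capF (TimedRB.NT T) ((p.conf 0 i).2 x)) = _
        funext x
        rw [(hrun i).2 x, TimedRB.capF_zero]
      · intro t
        rw [show q.sync t = TimedRB.syncOf (p.sync t) from rfl, TimedRB.moved_syncOf]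
        exact hmoved t
      · funext t
        exact (hv2 t).symm
end
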